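/- arXiv:1201.2712 — 8 statements merged into one kernel-verified Lean document; each statement's English description precedes it below -/
import Mathlib

section
/- For every integer k ≥ 2, there exists a digraph D with an arc-coloring using k+1 colors such that D has no k-colored kernel. Concretely, the directed cycle on 2k+2 vertices u_0,...,u_{2k+1} in which the arcs (u_{2i},u_{2i+1}) and (u_{2i+1},u_{2i+2}) receive color i for 0 ≤ i ≤ k (indices mod 2k+2) has no k-colored kernel. -/
variable {V : Type*}

/-- `l` is a directed path from `u` to `v` in the digraph with arc relation `A`:
a nonempty list of distinct vertices, consecutive ones joined by arcs,
starting at `u` and ending at `v`. -/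
def IsPathFrom (A : V → V → Prop) (u v : V) (l : List V) : Prop :=
  l.Chain' A ∧ l.Nodup ∧ l.head? = some u ∧ l.getLast? = some v

/-- The set of colors used by the consecutive arcs of the list `l`. -/
def listColors (col : V → V → ℕ) (l : List V) : Finset ℕ :=
  ((l.zip l.tail).map fun p => col p.1 p.2).toFinset

/-- There is a directed path from `u` to `v` using at most `k` colors. -/
def ReachK (A : V → V → Prop) (col : V → V → ℕ) (k : ℕ) (u v : V) : Prop :=
  ∃ l, IsPathFrom A u v l ∧ (listColors col l).card ≤ k

/-- There is a directed path from `u` to `v`. -/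
def Reach (A : V → V → Prop) (u v : V) : Prop :=
  ∃ l, IsPathFrom A u v l

/-- A nonempty list `l` of distinct vertices is a directed cycle:
consecutive vertices are joined by arcs, and there is a closing arc from
the last vertex back to the first one. -/
def IsCycle (A : V → V → Prop) (l : List V) : Prop :=
  l ≠ [] ∧ l.Chain' A ∧ l.Nodup ∧
    ∀ a b, l.getLast? = some a → l.head? = some b → A a b

/-- The set of colors of the arcs of the cycle `l` (including the closing arc). -/
def cycleColors (col : V → V → ℕ) (l : List V) : Finset ℕ :=
  listColors col (l ++ l.take 1)

/-- `(u,v)` is one of the arcs of the cycle `l`. -/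
def ArcOfCycle (l : List V) (u v : V) : Prop :=
  (u, v) ∈ l.zip l.tail ∨ (l.getLast? = some u ∧ l.head? = some v)

/-- `K` is a `k`-colored kernel of the digraph `A` arc-colored by `col`:
no directed path using at most `k` colors joins two distinct vertices of `K`,
and every vertex outside of `K` has a directed path using at most `k` colors
to some vertex of `K`. -/
def IsKColoredKernel (A : V → V → Prop) (col : V → V → ℕ) (k : ℕ) (K : Set V) : Prop :=
  (∀ u ∈ K, ∀ v ∈ K, u ≠ v → ¬ ReachK A col k u v) ∧
  (∀ u, u ∉ K → ∃ v ∈ K, ReachK A col k u v)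

/-- The arc relation of the `k`-colored closure of the digraph `A` colored by `col`. -/
def ClosureArc (A : V → V → Prop) (col : V → V → ℕ) (k : ℕ) (u v : V) : Prop :=
  u ≠ v ∧ ReachK A col k u v

/-- `K` is a kernel of the digraph with arc relation `B`. -/
def IsKernel (B : V → V → Prop) (K : Set V) : Prop :=
  (∀ u ∈ K, ∀ v ∈ K, u ≠ v → ¬ B u v) ∧ (∀ u, u ∉ K → ∃ v ∈ K, B u v)

lemma path_get {n : ℕ} {u v : ZMod n} {l : List (ZMod n)}
    (h : IsPathFrom (fun a b : ZMod n => b = a + 1) u v l) :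
    ∀ i (hi : i < l.length), l[i] = u + (i : ZMod n) := by
  obtain ⟨hc, -, hh, -⟩ := h
  intro i
  induction i with
  | zero =>
      intro hi
      obtain ⟨ys, rfl⟩ := List.head?_eq_some_iff.mp hh
      simp
  | succ i ih =>
      intro hi
      have h1 : i < l.length - 1 := by omega
      have := List.isChain_iff_getElem.mp hc i (by omega)
      rw [this, ih (by omega)]
      push_cast
      ring

lemma path_len {n : ℕ} [NeZero n] {u v : ZMod n} {l : List (ZMod n)}
    (h : IsPathFrom (fun a b : ZMod n => b = a + 1) u v l) :
    1 ≤ l.length ∧ l.length ≤ n ∧ v = u + ((l.length - 1 : ℕ) : ZMod n) := by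
  have hg := path_get h
  obtain ⟨-, hnd, hh, hl⟩ := h
  have hne : l ≠ [] := by rintro rfl; simp at hh
  have h1 : 1 ≤ l.length := by
    cases l with | nil => simp at hh | cons a t => simp [Nat.succ_le_succ]
  have hn : l.length ≤ n := by
    by_contra hc
    push_neg at hc
    have e0 : l[0]'(by omega) = u + ((0:ℕ) : ZMod n) := hg 0 (by omega)
    have en : l[n]'(by omega) = u + ((n:ℕ) : ZMod n) := hg n (by omega)
    have : l[0]'(by omega) = l[n]'(by omega) := by
      rw [e0, en]; simp
    have := hnd.getElem_inj_iff.mp this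
    exact (NeZero.ne n) this.symm
  refine ⟨h1, hn, ?_⟩
  have : l.getLast? = some (l[l.length - 1]'(by omega)) := by
    rw [List.getLast?_eq_getElem?]
    exact List.getElem?_eq_getElem (by omega)
  rw [this] at hl
  have := hg (l.length - 1) (by omega)
  rw [this] at hl
  exact (Option.some_inj.mp hl).symm

lemma color_mem {V : Type*} (col : V → V → ℕ) (l : List V) (i : ℕ) (hi : i + 1 < l.length) :
    col (l[i]'(by omega)) (l[i+1]'hi) ∈ listColors col l := by
  have hz : i < (l.zip l.tail).length := by
    simp only [List.length_zip, List.length_tail]; omega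
  have he : (l.zip l.tail)[i]'hz = (l[i]'(by omega), l[i+1]'hi) := by
    rw [List.getElem_zip, List.getElem_tail]
  simp only [listColors, List.mem_toFinset, List.mem_map]
  exact ⟨_, List.getElem_mem hz, by rw [he]⟩

lemma mem_listColors {V : Type*} {col : V → V → ℕ} {l : List V} {x : ℕ}
    (hx : x ∈ listColors col l) :
    ∃ i, ∃ hi : i + 1 < l.length, x = col (l[i]'(by omega)) (l[i+1]'hi) := by
  simp only [listColors, List.mem_toFinset, List.mem_map] at hx
  obtain ⟨p, hp, hpx⟩ := hx
  obtain ⟨i, hi, hpe⟩ := List.mem_iff_getElem.mp hp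
  have hi' : i + 1 < l.length := by
    simp only [List.length_zip, List.length_tail] at hi; omega
  refine ⟨i, hi', ?_⟩
  rw [List.getElem_zip, List.getElem_tail] at hpe
  rw [← hpx, ← hpe]
lemma no_reach_back (k : ℕ) (hk : 2 ≤ k) (v : ZMod (2*k+2)) :
    ¬ ReachK (fun a b : ZMod (2*k+2) => b = a + 1) (fun u _ => u.val / 2) k (v+1) v := by
  haveI : NeZero (2*k+2) := ⟨by omega⟩
  rintro ⟨l, hp, hcard⟩
  have hg := path_get hp
  obtain ⟨h1, hn, hv⟩ := path_len hp
  have hL : l.length = 2*k+2 := by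
    have e1 : ((l.length - 1 : ℕ) : ZMod (2*k+2)) = ((2*k+1 : ℕ) : ZMod (2*k+2)) := by
      have e2 : (v+1) + ((l.length - 1 : ℕ) : ZMod (2*k+2))
          = (v+1) + ((2*k+1:ℕ) : ZMod (2*k+2)) := by
        rw [← hv]
        have := ZMod.natCast_self (2*k+2)
        push_cast at this ⊢
        linear_combination -this
      exact add_left_cancel e2
    have h2 := congrArg ZMod.val e1
    rw [ZMod.val_cast_of_lt (by omega), ZMod.val_cast_of_lt (by omega)] at h2
    omega
  have hsub : Finset.range (k+1) ⊆ listColors (fun (u _ : ZMod (2*k+2)) => u.val/2) l := by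
    intro c hc
    rw [Finset.mem_range] at hc
    obtain ⟨w, hwv, hwc⟩ : ∃ w : ZMod (2*k+2), w ≠ v ∧ w.val / 2 = c := by
      by_cases h2c : ((2*c : ℕ) : ZMod (2*k+2)) = v
      · refine ⟨((2*c+1 : ℕ) : ZMod (2*k+2)), ?_, ?_⟩
        · intro h; rw [← h] at h2c
          have := congrArg ZMod.val h2c
          rw [ZMod.val_cast_of_lt (by omega), ZMod.val_cast_of_lt (by omega)] at this
          omega
        · rw [ZMod.val_cast_of_lt (by omega)]; omega
      · exact ⟨_, h2c, by rw [ZMod.val_cast_of_lt (by omega)]; omega⟩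
    set i := (w - (v+1)).val with hidef
    have hiv : ((i:ℕ) : ZMod (2*k+2)) = w - (v+1) := ZMod.natCast_rightInverse _
    have hilt : i < 2*k+2 := ZMod.val_lt _
    have hine : i ≠ 2*k+1 := by
      intro h
      apply hwv
      have hw : w = (v+1) + ((i:ℕ) : ZMod (2*k+2)) := by rw [hiv]; ring
      rw [h] at hw
      rw [hw]
      have hm1 : ((2*k+1 : ℕ) : ZMod (2*k+2)) = -1 := by
        have := ZMod.natCast_self (2*k+2)
        push_cast at this ⊢
        linear_combination this
      rw [hm1]; ring
    have hli : l[i]'(by omega) = w := by rw [hg i (by omega), hiv]; ring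
    have hmem := color_mem (fun (u _ : ZMod (2*k+2)) => u.val/2) l i (by omega)
    rw [hli, hwc] at hmem
    exact hmem
  have := Finset.card_le_card hsub
  rw [Finset.card_range] at this
  omega

lemma val_add_one_of_even {n : ℕ} [NeZero n] (hn : 2 ∣ n) (w : ZMod n) (hw : w.val % 2 = 0) :
    (w + 1).val = w.val + 1 := by
  have h1 : w.val < n := ZMod.val_lt w
  have h2 : w.val + 1 < n := by omega
  have he : w + 1 = ((w.val + 1 : ℕ) : ZMod n) := by
    push_cast
    rw [ZMod.natCast_rightInverse w]
  rw [he, ZMod.val_cast_of_lt h2]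

lemma val_sub_one_of_odd {n : ℕ} [NeZero n] (w : ZMod n) (hw : w.val % 2 = 1) :
    (w - 1).val = w.val - 1 := by
  have h1 : w.val < n := ZMod.val_lt w
  have he : w - 1 = ((w.val - 1 : ℕ) : ZMod n) := by
    rw [Nat.cast_sub (by omega), ZMod.natCast_rightInverse w]
    push_cast
    ring
  rw [he, ZMod.val_cast_of_lt (by omega)]

lemma reach_fwd (k : ℕ) (hk : 2 ≤ k) (u : ZMod (2*k+2)) (d : ℕ) (hd1 : 1 ≤ d)
    (hd : d ≤ 2*k-1) :
    ReachK (fun a b : ZMod (2*k+2) => b = a + 1) (fun w _ => w.val / 2) k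
      u (u + (d : ZMod (2*k+2))) := by
  haveI : NeZero (2*k+2) := ⟨by omega⟩
  set l : List (ZMod (2*k+2)) :=
    (List.range (d+1)).map (fun i : ℕ => u + (i : ZMod (2*k+2))) with hldef
  have hlen : l.length = d + 1 := by simp [hldef]
  have hget : ∀ i, ∀ h : i < l.length, l[i]'h = u + (i : ZMod (2*k+2)) := by
    intro i h
    simp [hldef]
  refine ⟨l, ⟨?_, ?_, ?_, ?_⟩, ?_⟩
  · refine List.isChain_iff_getElem.mpr ?_
    intro i hi
    rw [hget i (by omega), hget (i+1) (by omega)]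
    push_cast
    ring
  · refine List.Nodup.map_on ?_ List.nodup_range
    intro x hx y hy hxy
    rw [List.mem_range] at hx hy
    have := add_left_cancel hxy
    have := congrArg ZMod.val this
    rw [ZMod.val_cast_of_lt (by omega), ZMod.val_cast_of_lt (by omega)] at this
    exact this
  · rw [List.head?_eq_getElem?, List.getElem?_eq_getElem (by omega), hget 0 (by omega)]
    simp
  · rw [List.getLast?_eq_getElem?, hlen]
    simp only [Nat.add_sub_cancel]
    rw [List.getElem?_eq_getElem (by omega), hget d (by omega)]
  · have hsub : listColors (fun (w _ : ZMod (2*k+2)) => w.val / 2) l ⊆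
        (Finset.range (d/2+1)).image
          (fun j => (u + ((2*j : ℕ) : ZMod (2*k+2))).val / 2) := by
      intro x hx
      obtain ⟨i, hi, hxe⟩ := mem_listColors hx
      have hid : i < d := by rw [hlen] at hi; omega
      rw [hget i (by omega)] at hxe
      set w := u + (i : ZMod (2*k+2)) with hwdef
      rw [Finset.mem_image]
      rcases Nat.even_or_odd i with hie | hio
      · obtain ⟨m, hm⟩ := hie
        refine ⟨i/2, Finset.mem_range.mpr (by omega), ?_⟩
        rw [show 2 * (i/2) = i by omega]
        exact hxe.symm
      · obtain ⟨m, hm⟩ := hio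
        rcases Nat.even_or_odd w.val with hwe | hwo
        · -- w.val even: use i+1
          have hwe' : w.val % 2 = 0 := Nat.even_iff.mp hwe
          refine ⟨(i+1)/2, Finset.mem_range.mpr (by omega), ?_⟩
          rw [show 2 * ((i+1)/2) = i + 1 by omega]
          have hc : u + ((i+1 : ℕ) : ZMod (2*k+2)) = w + 1 := by
            rw [hwdef]; push_cast; ring
          rw [hc, val_add_one_of_even ⟨k+1, by ring⟩ w hwe']
          rw [hxe]
          omega
        · have hwo' : w.val % 2 = 1 := Nat.odd_iff.mp hwo
          refine ⟨(i-1)/2, Finset.mem_range.mpr (by omega), ?_⟩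
          rw [show 2 * ((i-1)/2) = i - 1 by omega]
          have hc : u + ((i-1 : ℕ) : ZMod (2*k+2)) = w - 1 := by
            rw [hwdef, Nat.cast_sub (by omega)]
            push_cast
            ring
          rw [hc, val_sub_one_of_odd w hwo']
          rw [hxe]
          omega
    have h2 := Finset.card_le_card hsub
    have h3 := Finset.card_image_le (s := Finset.range (d/2+1))
      (f := fun j => (u + ((2*j : ℕ) : ZMod (2*k+2))).val / 2)
    rw [Finset.card_range] at h3
    omega

/-- The directed cycle on `2k+2` vertices, with the arcs `(u_{2i}, u_{2i+1})` and
`(u_{2i+1}, u_{2i+2})` colored `i` (a `(k+1)`-coloring), has no `k`-colored kernel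
whenever `k ≥ 2`. -/
theorem stmt_0 (k : ℕ) (hk : 2 ≤ k) :
    ¬ ∃ K : Set (ZMod (2 * k + 2)),
      IsKColoredKernel (fun u v => v = u + 1) (fun u _ => u.val / 2) k K := by
  haveI : NeZero (2*k+2) := ⟨by omega⟩
  haveI : Fact (1 < 2*k+2) := ⟨by omega⟩
  rintro ⟨K, hind, habs⟩
  have huniq : ∀ u ∈ K, ∀ v ∈ K, u = v := by
    intro u hu v hv
    by_contra hne
    have hvu : v - u ≠ 0 := sub_ne_zero.mpr fun h => hne h.symm
    have hd1 : (v - u).val ≠ 0 := by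
      rwa [Ne, ZMod.val_eq_zero]
    have hdlt : (v - u).val < 2*k+2 := ZMod.val_lt _
    by_cases hcase : (v - u).val ≤ 2*k-1
    · have hr := reach_fwd k hk u ((v-u).val) (by omega) hcase
      rw [ZMod.natCast_rightInverse (v - u)] at hr
      have he : u + (v - u) = v := by ring
      rw [he] at hr
      exact hind u hu v hv hne hr
    · have hneg : (u - v).val = 2*k+2 - (v-u).val := by
        have he : u - v = -(v - u) := by ring
        rw [he, ZMod.neg_val, if_neg hvu]
      have hr := reach_fwd k hk v ((u-v).val) (by omega) (by omega)
      rw [ZMod.natCast_rightInverse (u - v)] at hr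
      have he : v + (u - v) = u := by ring
      rw [he] at hr
      exact hind v hv u hu (Ne.symm hne) hr
  obtain ⟨v, hv⟩ : ∃ v, v ∈ K := by
    by_contra he
    push_neg at he
    obtain ⟨w, hw, -⟩ := habs 0 (he 0)
    exact he w hw
  have h1ne : (v + 1 : ZMod (2*k+2)) ≠ v := by
    intro h
    have h10 : (1 : ZMod (2*k+2)) = 0 := by linear_combination h
    have := congrArg ZMod.val h10
    rw [ZMod.val_one, ZMod.val_zero] at this
    exact one_ne_zero this
  have hnmem : (v + 1 : ZMod (2*k+2)) ∉ K := fun h => h1ne (huniq _ h _ hv)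
  obtain ⟨w, hw, hr⟩ := habs (v+1) hnmem
  rw [huniq w hw v hv] at hr
  exact no_reach_back k hk v hr
end

section
/- Let D be an arc-colored digraph such that for all vertices u,v, if there exists a directed path from u to v then there exists a directed path from u to v using at most k colors. Then D has a k'-colored kernel for every k' ≥ k. -/
variable {V : Type*}

lemma reach_refl (A : V → V → Prop) (u : V) : Reach A u u :=
  ⟨[u], by simp [IsPathFrom, List.Chain']⟩

lemma rtg_of_path {A : V → V → Prop} :
    ∀ (l : List V) (u v : V), IsPathFrom A u v l → Relation.ReflTransGen A u v := by
  intro l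
  induction l with
  | nil => intro u v hp; simp [IsPathFrom] at hp
  | cons a t ih =>
    intro u v hp
    obtain ⟨hc, hn, hh, hl⟩ := hp
    simp at hh; subst hh
    cases t with
    | nil => simp at hl; subst hl; exact Relation.ReflTransGen.refl
    | cons b t' =>
      rw [List.getLast?_cons_cons] at hl
      rw [List.Chain', List.isChain_cons_cons] at hc
      exact Relation.ReflTransGen.head hc.1
        (ih b v ⟨hc.2, (List.nodup_cons.mp hn).2, rfl, hl⟩)

lemma reach_prepend {A : V → V → Prop} {w u v : V} (hwu : A w u) (hr : Reach A u v) :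
    Reach A w v := by
  classical
  obtain ⟨l, hc, hn, hh, hl⟩ := hr
  by_cases hw : w ∈ l
  · obtain ⟨s, t, rfl⟩ := List.append_of_mem hw
    refine ⟨w :: t, ?_, ?_, rfl, ?_⟩
    · exact (List.isChain_append.mp hc).2.1
    · exact hn.sublist (List.sublist_append_right s (w :: t))
    · rw [List.getLast?_append_of_ne_nil s (by simp : (w :: t) ≠ [])] at hl
      exact hl
  · refine ⟨w :: l, ?_, List.nodup_cons.mpr ⟨hw, hn⟩, rfl, ?_⟩
    · rw [List.Chain', List.isChain_cons]
      exact ⟨fun y hy => by rw [hh] at hy; simp at hy; subst hy; exact hwu, hc⟩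
    · cases l with
      | nil => simp at hh
      | cons c t => rw [List.getLast?_cons_cons]; exact hl

lemma reach_of_rtg {A : V → V → Prop} {u v : V} (hr : Relation.ReflTransGen A u v) :
    Reach A u v := by
  induction hr using Relation.ReflTransGen.head_induction_on with
  | refl => exact reach_refl A v
  | head hab _ ih => exact reach_prepend hab ih

lemma reach_trans {A : V → V → Prop} {u v w : V} (h1 : Reach A u v) (h2 : Reach A v w) :
    Reach A u w := by
  obtain ⟨l1, hp1⟩ := h1
  obtain ⟨l2, hp2⟩ := h2
  exact reach_of_rtg ((rtg_of_path l1 u v hp1).trans (rtg_of_path l2 v w hp2))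

lemma reach_of_reachK {A : V → V → Prop} {col : V → V → ℕ} {k : ℕ} {u v : V}
    (h : ReachK A col k u v) : Reach A u v := ⟨h.choose, h.choose_spec.1⟩

lemma exists_terminal [Fintype V] {A : V → V → Prop} (u : V) :
    ∃ w, Reach A u w ∧ ∀ x, Reach A w x → Reach A x w := by
  classical
  obtain ⟨w, hwS, hwmin⟩ := Finset.exists_min_image
    (Finset.univ.filter (fun x => Reach A u x))
    (fun x => (Finset.univ.filter (fun y => Reach A x y)).card)
    ⟨u, by simp [reach_refl]⟩
  simp only [Finset.mem_filter, Finset.mem_univ, true_and] at hwS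
  refine ⟨w, hwS, fun x hwx => ?_⟩
  by_contra hxw
  have hx : x ∈ Finset.univ.filter (fun y => Reach A u y) := by
    simp only [Finset.mem_filter, Finset.mem_univ, true_and]
    exact reach_trans hwS hwx
  have hsub : Finset.univ.filter (fun y => Reach A x y) ⊂
      Finset.univ.filter (fun y => Reach A w y) := by
    constructor
    · intro y hy
      simp only [Finset.mem_filter, Finset.mem_univ, true_and] at hy ⊢
      exact reach_trans hwx hy
    · intro hc
      have hw' : w ∈ Finset.univ.filter (fun y => Reach A w y) := by
        simp only [Finset.mem_filter, Finset.mem_univ, true_and]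
        exact reach_refl A w
      have := hc hw'
      simp only [Finset.mem_filter, Finset.mem_univ, true_and] at this
      exact hxw this
  exact absurd (hwmin x hx) (not_le.mpr (Finset.card_lt_card hsub))

/-- If whenever `v` is reachable from `u` there is a directed path from `u` to `v`
using at most `k` colors, then `D` has a `k'`-colored kernel for every `k' ≥ k`. -/
theorem stmt_1 [Fintype V] [Nonempty V] (A : V → V → Prop) (col : V → V → ℕ) (k : ℕ)
    (h : ∀ u v : V, Reach A u v → ReachK A col k u v) :
    ∀ k', k ≤ k' → ∃ K : Set V, IsKColoredKernel A col k' K := by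
  intro k' hk'
  classical
  have hK' : ∀ u v, Reach A u v → ReachK A col k' u v := by
    intro u v hr
    obtain ⟨l, hp, hc⟩ := h u v hr
    exact ⟨l, hp, hc.trans hk'⟩
  let idx : V → ℕ := fun v => (Fintype.equivFin V v : ℕ)
  have hidx : Function.Injective idx := fun a b hab => by
    have : Fintype.equivFin V a = Fintype.equivFin V b := Fin.ext hab
    exact (Fintype.equivFin V).injective this
  refine ⟨{v | (∀ x, Reach A v x → Reach A x v) ∧
      ∀ x, Reach A v x → Reach A x v → idx v ≤ idx x}, ?_, ?_⟩
  · intro u hu v hv huv hrk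
    have hr : Reach A u v := reach_of_reachK hrk
    have hr' : Reach A v u := hu.1 v hr
    have h1 := hu.2 v hr hr'
    have h2 := hv.2 u hr' hr
    exact huv (hidx (le_antisymm h1 h2))
  · intro u _
    obtain ⟨w, huw, hwt⟩ := exists_terminal (A := A) u
    obtain ⟨m, hmS, hmmin⟩ := Finset.exists_min_image
      (Finset.univ.filter (fun x => Reach A w x ∧ Reach A x w)) idx
      ⟨w, by simp [reach_refl]⟩
    simp only [Finset.mem_filter, Finset.mem_univ, true_and] at hmS
    obtain ⟨hwm, hmw⟩ := hmS
    have hmt : ∀ x, Reach A m x → Reach A x m := fun x hmx =>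
      reach_trans (hwt x (reach_trans hwm hmx)) hwm
    refine ⟨m, ⟨hmt, fun x hmx hxm => ?_⟩, hK' u m (reach_trans huw hwm)⟩
    exact hmmin x (by
      simp only [Finset.mem_filter, Finset.mem_univ, true_and]
      exact ⟨reach_trans hwm hmx, reach_trans hxm hmw⟩)
end

section
/- Let D be an arc-colored digraph such that every directed cycle of D is monochromatic. If T1 is a directed path from u to v and T2 is a directed path from v to u, then the set of colors appearing on T1 equals the set of colors appearing on T2. -/
variable {V : Type*}

section Helpers

open List in
private lemma listColors_cons_cons' (col : V → V → ℕ) (a b : V) (l : List V) :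
    listColors col (a :: b :: l) = insert (col a b) (listColors col (b :: l)) := by
  simp [listColors]

private lemma listColors_single' (col : V → V → ℕ) (a : V) : listColors col [a] = ∅ := rfl

private lemma listColors_split' (col : V → V → ℕ) : ∀ (s : List V) (w : V) (t : List V),
    listColors col (s ++ w :: t) = listColors col (s ++ [w]) ∪ listColors col (w :: t)
  | [], w, t => by simp [listColors_single']
  | [a], w, t => by
      simp only [List.cons_append, List.nil_append, listColors_cons_cons', listColors_single',
        Finset.insert_eq]
      simp
  | a :: b :: s, w, t => by
      simp only [List.cons_append, listColors_cons_cons']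
      rw [show (b :: (s ++ w :: t)) = ((b :: s) ++ w :: t) by simp,
        listColors_split' col (b :: s) w t]
      simp [Finset.insert_union]

private lemma exists_first_split' (p : V → Prop) : ∀ (l : List V), (∃ x ∈ l, p x) →
    ∃ s w t, l = s ++ w :: t ∧ p w ∧ ∀ x ∈ s, ¬ p x
  | [], h => by simp at h
  | a :: l, h => by
      by_cases ha : p a
      · exact ⟨[], a, l, rfl, ha, by simp⟩
      · obtain ⟨x, hx, hpx⟩ := h
        have hx' : x ∈ l := by
          rcases List.mem_cons.1 hx with rfl | hx'
          · exact absurd hpx ha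
          · exact hx'
        obtain ⟨s, w, t, heq, hw, hs⟩ := exists_first_split' p l ⟨x, hx', hpx⟩
        exact ⟨a :: s, w, t, by simp [heq], hw, by
          intro y hy
          rcases List.mem_cons.1 hy with rfl | hy'
          · exact ha
          · exact hs y hy'⟩

private lemma path_self_eq' {A : V → V → Prop} {u : V} {l : List V}
    (hl : IsPathFrom A u u l) : l = [u] := by
  obtain ⟨_, hn, hh, hg⟩ := hl
  match l with
  | [] => simp at hh
  | [a] =>
    simp only [List.head?_cons, Option.some.injEq] at hh
    rw [hh]
  | a :: b :: r =>
    simp only [List.head?_cons, Option.some.injEq] at hh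
    rw [List.getLast?_cons_cons] at hg
    have hmem : u ∈ b :: r := List.mem_of_getLast? hg
    rw [← hh] at hmem
    simp only [List.nodup_cons, List.mem_cons] at hn hmem
    tauto

private lemma union_eq_of_card_le_one' {X Y : Finset ℕ} (hX : X.Nonempty) (hY : Y.Nonempty)
    (h : (X ∪ Y).card ≤ 1) : X = Y := by
  have h1 : X = X ∪ Y := by
    apply Finset.eq_of_subset_of_card_le (Finset.subset_union_left)
    calc (X ∪ Y).card ≤ 1 := h
      _ ≤ X.card := Finset.one_le_card.2 hX
  have h2 : Y = X ∪ Y := by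
    apply Finset.eq_of_subset_of_card_le (Finset.subset_union_right)
    calc (X ∪ Y).card ≤ 1 := h
      _ ≤ Y.card := Finset.one_le_card.2 hY
  exact h1.trans h2.symm

private lemma main_lemma' (A : V → V → Prop) (col : V → V → ℕ)
    (h : ∀ l : List V, IsCycle A l → (cycleColors col l).card ≤ 1) :
    ∀ n (u v : V) (T1 T2 : List V), T2.length ≤ n →
      IsPathFrom A u v T1 → IsPathFrom A v u T2 →
      listColors col T1 = listColors col T2 := by
  intro n
  induction n with
  | zero =>
    intro u v T1 T2 hlen h1 h2
    obtain ⟨_, _, hh, _⟩ := h2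
    rw [List.length_eq_zero_iff.1 (Nat.le_zero.1 hlen)] at hh
    simp at hh
  | succ n ih =>
    intro u v T1 T2 hlen h1 h2
    by_cases huv : u = v
    · subst huv
      rw [path_self_eq' h1, path_self_eq' h2]
    obtain ⟨c1, n1, hh1, hg1⟩ := h1
    obtain ⟨c2, n2, hh2, hg2⟩ := h2
    -- T2 = v :: rest
    obtain ⟨rest, rfl⟩ : ∃ rest, T2 = v :: rest := by
      match T2, hh2 with
      | a :: r, hh =>
        simp only [List.head?_cons, Option.some.injEq] at hh
        exact ⟨r, by rw [hh]⟩
    have hu_rest : u ∈ rest := by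
      have hmem := List.mem_of_getLast? hg2
      rcases List.mem_cons.1 hmem with rfl | h'
      · exact absurd rfl huv
      · exact h'
    have hu_T1 : u ∈ T1 := by
      match T1, hh1 with
      | a :: r, hh =>
        simp only [List.head?_cons, Option.some.injEq] at hh
        simp [← hh]
    obtain ⟨s, w, t, rfl, hwT1, hs⟩ :=
      exists_first_split' (· ∈ T1) rest ⟨u, hu_rest, hu_T1⟩
    obtain ⟨s1, t1, rfl⟩ := List.append_of_mem hwT1
    -- regroup T2
    have c2' : List.Chain' A ((v :: s) ++ w :: t) := by simpa using c2
    have n2' : ((v :: s) ++ (w :: t)).Nodup := by simpa using n2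
    obtain ⟨nvs, -, -⟩ := List.nodup_append.1 n2'
    -- chains
    have cP1 : List.Chain' A (s1 ++ [w]) := (List.isChain_split.1 c1).1
    have cP2 : List.Chain' A (w :: t1) := (List.isChain_split.1 c1).2
    have cQ1 : List.Chain' A ((v :: s) ++ [w]) := (List.isChain_split.1 c2').1
    have cQ2 : List.Chain' A (w :: t) := (List.isChain_split.1 c2').2
    -- nodups
    have nP1 : (s1 ++ [w]).Nodup :=
      n1.sublist (List.Sublist.append_left
        (List.cons_sublist_cons.2 (List.nil_sublist t1)) s1)
    have nP2 : (w :: t1).Nodup := n1.sublist (List.sublist_append_right s1 (w :: t1))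
    have nQ1 : ((v :: s) ++ [w]).Nodup :=
      n2'.sublist (List.Sublist.append_left
        (List.cons_sublist_cons.2 (List.nil_sublist t)) (v :: s))
    have nQ2 : (w :: t).Nodup := n2'.sublist (List.sublist_append_right (v :: s) (w :: t))
    -- heads and lasts
    have hP1h : (s1 ++ [w]).head? = some u := by
      simp only [List.head?_append, List.head?_cons] at hh1 ⊢
      exact hh1
    have hP1g : (s1 ++ [w]).getLast? = some w := by
      simp [List.getLast?_append]
    have hP2g : (w :: t1).getLast? = some v := by
      rw [List.getLast?_append] at hg1
      cases hx : (w :: t1).getLast? with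
      | none => simp [List.getLast?_eq_none_iff] at hx
      | some x => rw [hx] at hg1; simpa using hg1
    have hQ1h : ((v :: s) ++ [w]).head? = some v := by simp
    have hQ1g : ((v :: s) ++ [w]).getLast? = some w := by
      rw [List.getLast?_append]; rfl
    have hQ2g : (w :: t).getLast? = some u := by
      have hg2' : ((v :: s) ++ (w :: t)).getLast? = some u := by simpa using hg2
      rw [List.getLast?_append] at hg2'
      cases hx : (w :: t).getLast? with
      | none => simp [List.getLast?_eq_none_iff] at hx
      | some x => rw [hx] at hg2'; simpa using hg2'
    -- w ≠ v
    have hwv : w ≠ v := by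
      rintro rfl
      exact (List.nodup_cons.1 n2).1 (by simp)
    -- t1 ≠ []
    have ht1 : t1 ≠ [] := by
      rintro rfl
      simp only [List.getLast?_singleton, Option.some.injEq] at hP2g
      exact hwv hP2g
    -- the cycle
    have hcyc : IsCycle A ((w :: t1) ++ s) := by
      refine ⟨by simp, ?_, ?_, ?_⟩
      · apply List.isChain_append.2
        have hvs : List.Chain' A (v :: s) := cQ1.left_of_append
        refine ⟨cP2, (List.isChain_cons.1 hvs).2, ?_⟩
        intro x hx y hy
        rw [hP2g] at hx
        rw [Option.mem_def, Option.some.injEq] at hx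
        subst hx
        exact (List.isChain_cons.1 hvs).1 y hy
      · rw [List.nodup_append]
        refine ⟨nP2, (List.nodup_cons.1 nvs).2, ?_⟩
        intro a ha b ha' hab
        subst hab
        exact hs a ha' (by
          rcases List.mem_cons.1 ha with rfl | ha2
          · simp
          · exact List.mem_append.2 (Or.inr (List.mem_cons.2 (Or.inr ha2))))
      · intro a b hga hb
        have hb' : b = w := by
          simp only [List.cons_append, List.head?_cons, Option.some.injEq] at hb
          exact hb.symm
        have hga' : (v :: s).getLast? = some a := by
          rw [List.getLast?_append, hP2g] at hga
          rw [show (v :: s) = [v] ++ s from rfl, List.getLast?_append]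
          simpa using hga
        rw [hb']
        exact (List.isChain_append.1 cQ1).2.2 a hga' w rfl
    -- colors of the cycle
    obtain ⟨d, hd⟩ : ∃ d, w :: t1 = d ++ [v] := List.getLast?_eq_some_iff.1 hP2g
    have hcyccol : cycleColors col ((w :: t1) ++ s)
        = listColors col (w :: t1) ∪ listColors col ((v :: s) ++ [w]) := by
      have htake : ((w :: t1) ++ s).take 1 = [w] := by simp
      rw [cycleColors, htake,
        show (w :: t1) ++ s ++ [w] = d ++ (v :: (s ++ [w])) by rw [hd]; simp,
        listColors_split' col d v (s ++ [w]), ← hd]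
      rfl
    have hcard : (listColors col (w :: t1) ∪ listColors col ((v :: s) ++ [w])).card ≤ 1 := by
      have := h _ hcyc
      rwa [hcyccol] at this
    -- nonemptiness
    obtain ⟨a1, t1', rfl⟩ : ∃ a1 t1', t1 = a1 :: t1' := by
      cases t1 with
      | nil => exact absurd rfl ht1
      | cons a r => exact ⟨a, r, rfl⟩
    have hXne : (listColors col (w :: a1 :: t1')).Nonempty := by
      rw [listColors_cons_cons']
      exact ⟨col w a1, Finset.mem_insert_self _ _⟩
    obtain ⟨b1, sb, hsb⟩ : ∃ b1 sb, s ++ [w] = b1 :: sb := by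
      cases s with
      | nil => exact ⟨w, [], rfl⟩
      | cons a r => exact ⟨a, r ++ [w], rfl⟩
    have hYne : (listColors col ((v :: s) ++ [w])).Nonempty := by
      rw [List.cons_append, hsb, listColors_cons_cons']
      exact ⟨col v b1, Finset.mem_insert_self _ _⟩
    have hXY := union_eq_of_card_le_one' hXne hYne hcard
    -- induction hypothesis
    have hlen' : (w :: t).length ≤ n := by
      simp only [List.length_cons, List.length_append] at hlen ⊢
      omega
    have hIH : listColors col (s1 ++ [w]) = listColors col (w :: t) :=
      ih u w (s1 ++ [w]) (w :: t) hlen' ⟨cP1, nP1, hP1h, hP1g⟩ ⟨cQ2, nQ2, rfl, hQ2g⟩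
    calc listColors col (s1 ++ w :: (a1 :: t1'))
        = listColors col (s1 ++ [w]) ∪ listColors col (w :: a1 :: t1') :=
          listColors_split' col s1 w (a1 :: t1')
      _ = listColors col (w :: t) ∪ listColors col ((v :: s) ++ [w]) := by rw [hIH, hXY]
      _ = listColors col ((v :: s) ++ [w]) ∪ listColors col (w :: t) := Finset.union_comm _ _
      _ = listColors col ((v :: s) ++ w :: t) := (listColors_split' col (v :: s) w t).symm
      _ = listColors col (v :: (s ++ w :: t)) := by rw [List.cons_append]

end Helpers

/-- If every directed cycle of `D` is monochromatic, then any directed path from `u`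
to `v` and any directed path from `v` to `u` use exactly the same set of colors. -/
theorem stmt_5 (A : V → V → Prop) (col : V → V → ℕ)
    (h : ∀ l : List V, IsCycle A l → (cycleColors col l).card ≤ 1)
    (u v : V) (T1 T2 : List V)
    (h1 : IsPathFrom A u v T1) (h2 : IsPathFrom A v u T2) :
    listColors col T1 = listColors col T2 :=
  main_lemma' A col h T2.length u v T1 T2 le_rfl h1 h2
end

section
/- Let D be an arc-colored digraph such that every directed cycle of D is monochromatic. Then every directed cycle of the k-colored closure C_k(D) contains a symmetrical arc, i.e., an arc (u,v) with (v,u) also an arc of C_k(D). -/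
variable {V : Type*}

namespace StmtAux

theorem zip_tail_split (a : V) : ∀ (s t : List V),
    (s ++ a :: t).zip (s ++ a :: t).tail =
      (s ++ [a]).zip (s ++ [a]).tail ++ (a :: t).zip t
  | [], t => by simp
  | [x], t => by simp
  | x :: y :: s, t => by
    have ih := zip_tail_split a (y :: s) t
    simp only [List.cons_append, List.tail_cons, List.zip_cons_cons] at *
    rw [ih]

theorem chain'_pairs {A : V → V → Prop} :
    ∀ (l : List V), l.Chain' A ↔ ∀ p ∈ l.zip l.tail, A p.1 p.2
  | [] => by simp [List.Chain']
  | [x] => by simp [List.Chain']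
  | x :: y :: t => by
    simp only [List.Chain', List.isChain_cons_cons]
    simp only [List.tail_cons, List.zip_cons_cons, List.mem_cons]
    rw [show List.IsChain A (y :: t) ↔ _ from chain'_pairs (y :: t)]
    constructor
    · rintro ⟨hxy, h2⟩ p (rfl | hp)
      · exact hxy
      · exact h2 p hp
    · intro h; exact ⟨h _ (Or.inl rfl), fun p hp => h p (Or.inr hp)⟩

theorem listColors_subset {col : V → V → ℕ} {l l' : List V}
    (h : ∀ p ∈ l'.zip l'.tail, p ∈ l.zip l.tail) :
    listColors col l' ⊆ listColors col l := by
  intro c hc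
  simp only [listColors, List.mem_toFinset, List.mem_map] at *
  obtain ⟨p, hp, rfl⟩ := hc
  exact ⟨p, h p hp, rfl⟩

theorem listColors_eq_union {col : V → V → ℕ} {l p q : List V}
    (h : l.zip l.tail = p.zip p.tail ++ q.zip q.tail) :
    listColors col l = listColors col p ∪ listColors col q := by
  simp [listColors, h]

theorem exists_dup_split {l : List V} (h : ¬ l.Nodup) :
    ∃ (a : V) (l1 l2 l3 : List V), l = l1 ++ a :: l2 ++ a :: l3 := by
  induction l with
  | nil => simp at h
  | cons x t ih =>
    by_cases hx : x ∈ t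
    · obtain ⟨s, r, rfl⟩ := List.append_of_mem hx
      exact ⟨x, [], s, r, by simp⟩
    · have ht : ¬ t.Nodup := fun hn => h (List.nodup_cons.2 ⟨hx, hn⟩)
      obtain ⟨a, l1, l2, l3, rfl⟩ := ih ht
      exact ⟨a, x :: l1, l2, l3, rfl⟩

theorem walk_to_path {A : V → V → Prop} :
    ∀ (n : ℕ) (l : List V), l.length ≤ n → l.Chain' A → l ≠ [] →
    ∃ p : List V, p.Chain' A ∧ p.Nodup ∧ p.head? = l.head? ∧ p.getLast? = l.getLast? ∧
      ∀ q ∈ p.zip p.tail, q ∈ l.zip l.tail := by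
  intro n
  induction n with
  | zero =>
    intro l hl _ hne
    cases l with
    | nil => exact absurd rfl hne
    | cons x t => simp at hl
  | succ n ih =>
    intro l hl hc hne
    by_cases hd : l.Nodup
    · exact ⟨l, hc, hd, rfl, rfl, fun q hq => hq⟩
    · obtain ⟨a, l1, l2, l3, rfl⟩ := exists_dup_split hd
      -- pairs of original list
      have hsplit1 : (l1 ++ a :: (l2 ++ a :: l3)).zip (l1 ++ a :: (l2 ++ a :: l3)).tail =
          (l1 ++ [a]).zip (l1 ++ [a]).tail ++ (a :: (l2 ++ a :: l3)).zip (l2 ++ a :: l3) :=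
        zip_tail_split a l1 (l2 ++ a :: l3)
      have hsplit2 : ((a :: l2) ++ a :: l3).zip ((a :: l2) ++ a :: l3).tail =
          ((a :: l2) ++ [a]).zip ((a :: l2) ++ [a]).tail ++ (a :: l3).zip l3 :=
        zip_tail_split a (a :: l2) l3
      have hsplit3 : (l1 ++ a :: l3).zip (l1 ++ a :: l3).tail =
          (l1 ++ [a]).zip (l1 ++ [a]).tail ++ (a :: l3).zip l3 :=
        zip_tail_split a l1 l3
      have hsub : ∀ q ∈ (l1 ++ a :: l3).zip (l1 ++ a :: l3).tail,
          q ∈ (l1 ++ a :: l2 ++ a :: l3).zip (l1 ++ a :: l2 ++ a :: l3).tail := by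
        intro q hq
        rw [hsplit3, List.mem_append] at hq
        have : l1 ++ a :: l2 ++ a :: l3 = l1 ++ a :: (l2 ++ a :: l3) := by simp
        rw [this, hsplit1, List.mem_append]
        rcases hq with hq | hq
        · exact Or.inl hq
        · right
          have : (a :: (l2 ++ a :: l3)).zip (l2 ++ a :: l3) =
              ((a :: l2) ++ a :: l3).zip ((a :: l2) ++ a :: l3).tail := by simp
          rw [this, hsplit2, List.mem_append]
          exact Or.inr hq
      have hc' : (l1 ++ a :: l3).Chain' A := by
        rw [chain'_pairs]
        intro p hp
        exact (chain'_pairs _).1 hc p (hsub p hp)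
      have hlen : (l1 ++ a :: l3).length ≤ n := by
        simp only [List.length_append, List.length_cons] at hl ⊢
        omega
      obtain ⟨p, hp1, hp2, hp3, hp4, hp5⟩ :=
        ih (l1 ++ a :: l3) hlen hc' (by simp)
      refine ⟨p, hp1, hp2, ?_, ?_, fun q hq => hsub q (hp5 q hq)⟩
      · rw [hp3]; cases l1 <;> simp
      · rw [hp4]
        rw [List.getLast?_append_cons, show l1 ++ a :: l2 ++ a :: l3 = (l1 ++ a :: l2) ++ a :: l3 by simp,
          List.getLast?_append_cons]

theorem path_concat {A : V → V → Prop} {u w v : V} {p q : List V}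
    (hp : IsPathFrom A u w p) (hq : IsPathFrom A w v q) :
    ∃ r, IsPathFrom A u v r ∧
      ∀ x ∈ r.zip r.tail, x ∈ p.zip p.tail ∨ x ∈ q.zip q.tail := by
  obtain ⟨hpc, _, hph, hpl⟩ := hp
  obtain ⟨hqc, _, hqh, hql⟩ := hq
  obtain ⟨p', rfl⟩ := List.getLast?_eq_some_iff.1 hpl
  obtain ⟨q', rfl⟩ := List.head?_eq_some_iff.1 hqh
  set L := p' ++ w :: q' with hL
  have hpairs : L.zip L.tail = (p' ++ [w]).zip (p' ++ [w]).tail ++ (w :: q').zip q' :=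
    zip_tail_split w p' q'
  have hLc : L.Chain' A := by
    rw [chain'_pairs]
    intro x hx
    rw [hpairs, List.mem_append] at hx
    rcases hx with hx | hx
    · exact (chain'_pairs _).1 hpc x hx
    · exact (chain'_pairs _).1 hqc x (by simpa using hx)
  have hLh : L.head? = some u := by
    rw [← hph]; cases p' <;> simp [hL]
  have hLl : L.getLast? = some v := by
    rw [← hql, hL, List.getLast?_append_cons]
  obtain ⟨r, hr1, hr2, hr3, hr4, hr5⟩ :=
    walk_to_path L.length L le_rfl hLc (by simp [hL])
  refine ⟨r, ⟨hr1, hr2, by rw [hr3, hLh], by rw [hr4, hLl]⟩, ?_⟩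
  intro x hx
  have := hr5 x hx
  rw [hpairs, List.mem_append] at this
  simpa using this

theorem find_first {P : V → Prop} :
    ∀ (t : List V), (∃ x ∈ t, P x) →
      ∃ t1 w t2, t = t1 ++ w :: t2 ∧ P w ∧ ∀ x ∈ t1, ¬ P x := by
  intro t
  induction t with
  | nil => simp
  | cons x t ih =>
    intro hex
    by_cases hx : P x
    · exact ⟨[], x, t, by simp, hx, by simp⟩
    · have hex' : ∃ y ∈ t, P y := by
        obtain ⟨y, hy, hPy⟩ := hex
        rcases List.mem_cons.1 hy with rfl | hy'
        · exact absurd hPy hx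
        · exact ⟨y, hy', hPy⟩
      obtain ⟨t1, w, t2, rfl, hw, h1⟩ := ih hex'
      refine ⟨x :: t1, w, t2, rfl, hw, ?_⟩
      intro z hz
      rcases List.mem_cons.1 hz with rfl | hz'
      · exact hx
      · exact h1 z hz'

theorem path_shape {A : V → V → Prop} {u v : V} {p : List V} (hne : u ≠ v)
    (hp : IsPathFrom A u v p) : ∃ s, p = u :: s ∧ s ≠ [] ∧ s.getLast? = some v := by
  obtain ⟨_, _, hh, hl⟩ := hp
  obtain ⟨s, rfl⟩ := List.head?_eq_some_iff.1 hh
  refine ⟨s, rfl, ?_, ?_⟩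
  · rintro rfl
    simp at hl
    exact hne hl
  · rcases s with _ | ⟨y, s'⟩
    · simp at hl; exact absurd hl hne
    · simpa using hl

theorem listColors_nonempty {A : V → V → Prop} {col : V → V → ℕ} {u v : V} {p : List V}
    (hne : u ≠ v) (hp : IsPathFrom A u v p) : (listColors col p).Nonempty := by
  obtain ⟨s, rfl, hs, -⟩ := path_shape hne hp
  rcases s with _ | ⟨y, s'⟩
  · exact absurd rfl hs
  · exact ⟨col u y, by simp [listColors]⟩

theorem subset_of_union_card_le {s t : Finset ℕ} (hcard : (s ∪ t).card ≤ 1)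
    (hs : s.Nonempty) : t ⊆ s := by
  have h1 : s ⊆ s ∪ t := Finset.subset_union_left
  have h2 : s = s ∪ t :=
    Finset.eq_of_subset_of_card_le h1 (le_trans hcard hs.card_pos)
  rw [h2]
  exact Finset.subset_union_right

theorem listColors_subset_or {col : V → V → ℕ} {r a b : List V}
    (h : ∀ x ∈ r.zip r.tail, x ∈ a.zip a.tail ∨ x ∈ b.zip b.tail) :
    listColors col r ⊆ listColors col a ∪ listColors col b := by
  intro c hc
  simp only [listColors, List.mem_toFinset, List.mem_map, Finset.mem_union] at *
  obtain ⟨x, hx, rfl⟩ := hc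
  rcases h x hx with hx' | hx'
  · exact Or.inl ⟨x, hx', rfl⟩
  · exact Or.inr ⟨x, hx', rfl⟩

theorem build_cycle {A : V → V → Prop} {x v : V} {t1 t2 P : List V}
    (hqc : List.Chain' A ((v :: t1) ++ (x :: t2))) (hP : IsPathFrom A x v P)
    (hdisj : ∀ a ∈ t1, a ∉ P) (ht1n : t1.Nodup) : IsCycle A (P ++ t1) := by
  obtain ⟨hPc, hPn, hPh, hPl⟩ := hP
  obtain ⟨hq1, hq2, hq3⟩ := List.isChain_append.1 hqc
  refine ⟨?_, ?_, ?_, ?_⟩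
  · intro hc
    obtain ⟨hc1, -⟩ := List.append_eq_nil_iff.1 hc
    rw [hc1] at hPh; simp at hPh
  · rw [List.Chain', List.isChain_append]
    refine ⟨hPc, hq1.tail, ?_⟩
    intro a ha y hy
    rcases t1 with _ | ⟨z, t1'⟩
    · simp at hy
    · simp only [List.head?_cons, Option.mem_some_iff] at hy
      subst hy
      have ha' : a = v := by rw [hPl] at ha; exact (by simpa using ha : v = a).symm
      subst ha'
      exact hq1.rel_head
  · exact List.Nodup.append hPn ht1n fun a ha hat1 => hdisj a hat1 ha
  · intro a b hla hlb
    have hb : b = x := by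
      rw [List.head?_append_of_ne_nil _
        (fun hc => by simp [hc] at hPh), hPh] at hlb
      exact (Option.some_inj.1 hlb).symm
    have hx : b ∈ (x :: t2).head? := by simp [hb]
    rcases t1 with _ | ⟨z, t1'⟩
    · simp only [List.append_nil] at hla
      have hav : a = v := by rw [hPl] at hla; exact (by simpa using hla : v = a).symm
      exact hq3 a (by simp [hav]) b hx
    · rw [List.getLast?_append_cons] at hla
      refine hq3 a ?_ b hx
      rw [List.getLast?_cons_cons]
      exact Option.mem_def.2 hla

theorem cycle_colors_eq {col : V → V → ℕ} {x v : V} {t1 P : List V}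
    (hPh : P.head? = some x) (hPl : P.getLast? = some v) :
    cycleColors col (P ++ t1) = listColors col P ∪ listColors col ((v :: t1) ++ [x]) := by
  obtain ⟨P', rfl⟩ := List.head?_eq_some_iff.1 hPh
  obtain ⟨Ps, hPs⟩ := List.getLast?_eq_some_iff.1 hPl
  have ht : ((x :: P') ++ t1).take 1 = [x] := rfl
  rw [cycleColors, ht]
  apply listColors_eq_union
  rw [hPs]
  have h2 : (Ps ++ [v]) ++ t1 ++ [x] = Ps ++ v :: (t1 ++ [x]) := by simp
  rw [h2, zip_tail_split v Ps (t1 ++ [x])]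
  simp

theorem key {A : V → V → Prop} {col : V → V → ℕ}
    (h : ∀ l : List V, IsCycle A l → (cycleColors col l).card ≤ 1) :
    ∀ (n : ℕ) (q : List V), q.length ≤ n → ∀ u v : V, u ≠ v →
      IsPathFrom A v u q → ∀ p : List V, IsPathFrom A u v p →
      ∃ q', IsPathFrom A v u q' ∧ listColors col q' ⊆ listColors col p := by
  intro n
  induction n with
  | zero =>
    intro q hq u v hne hqp p _
    obtain ⟨s, rfl, -, -⟩ := path_shape (Ne.symm hne) hqp
    simp at hq
  | succ n ih =>
    intro q hq u v hne hqp p hpp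
    obtain ⟨t, rfl, htne, htl⟩ := path_shape (Ne.symm hne) hqp
    obtain ⟨hqc, hqn, hqh, hql⟩ := hqp
    obtain ⟨hpc, hpn, hph, hpl⟩ := hpp
    have hu_t : u ∈ t := by
      obtain ⟨t', ht'⟩ := List.getLast?_eq_some_iff.1 htl
      rw [ht']; simp
    have hu_p : u ∈ p := by
      obtain ⟨s, hs, -, -⟩ := path_shape hne ⟨hpc, hpn, hph, hpl⟩
      rw [hs]; simp
    obtain ⟨t1, w, t2, hteq, hwp, ht1p⟩ := find_first (P := fun x => x ∈ p) t ⟨u, hu_t, hu_p⟩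
    subst hteq
    have hvt : v ∉ t1 ++ w :: t2 := (List.nodup_cons.1 hqn).1
    have htn : (t1 ++ w :: t2).Nodup := (List.nodup_cons.1 hqn).2
    have ht1n : t1.Nodup := htn.of_append_left
    have hwv : w ≠ v := by rintro rfl; exact hvt (by simp)
    by_cases hwu : w = u
    · -- w = u, so t2 = [] and the whole path q lies on a cycle together with p
      subst hwu
      have ht2 : t2 = [] := by
        rcases t2 with _ | ⟨z, t2'⟩
        · rfl
        · exfalso
          have h1 : (t1 ++ w :: z :: t2').getLast? = some w := htl
          rw [List.getLast?_append_cons, List.getLast?_cons_cons] at h1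
          have hmem : w ∈ z :: t2' := by
            obtain ⟨ys, hys⟩ := List.getLast?_eq_some_iff.1 h1
            rw [hys]; simp
          have hnd : (w :: z :: t2').Nodup := htn.of_append_right
          exact (List.nodup_cons.1 hnd).1 hmem
      subst ht2
      have hcyc : IsCycle A (p ++ t1) :=
        build_cycle (x := w) (t2 := []) (by simpa using hqc) ⟨hpc, hpn, hph, hpl⟩ ht1p ht1n
      have hcard := h _ hcyc
      rw [cycle_colors_eq hph hpl] at hcard
      have hsub : listColors col ((v :: t1) ++ [w]) ⊆ listColors col p :=
        subset_of_union_card_le hcard (listColors_nonempty hne ⟨hpc, hpn, hph, hpl⟩)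
      exact ⟨v :: t1 ++ [w], ⟨hqc, hqn, hqh, hql⟩, by simpa using hsub⟩
    · -- w ≠ u : recurse on the shorter path from w to u
      obtain ⟨p1, p2, hpeq⟩ := List.append_of_mem hwp
      subst hpeq
      have hp2ne : p2 ≠ [] := by
        rintro rfl
        rw [show (p1 ++ [w]).getLast? = some w by simp] at hpl
        exact hwv (by simpa using hpl)
      have hp2l : p2.getLast? = some v := by
        have h1 : (w :: p2).getLast? = some v :=
          (List.getLast?_append_cons p1 w p2).symm.trans hpl
        rwa [show (w :: p2) = [w] ++ p2 from rfl,
          List.getLast?_append_of_ne_nil _ hp2ne] at h1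
      -- the path from w to v inside p
      have hwp2 : IsPathFrom A w v (w :: p2) :=
        ⟨hpc.suffix ⟨p1, rfl⟩, hpn.of_append_right, rfl, by
          rw [show (w :: p2) = [w] ++ p2 from rfl,
            List.getLast?_append_of_ne_nil _ hp2ne]
          exact hp2l⟩
      -- pairs of p split
      have hpsplit := zip_tail_split w p1 p2
      have hsub_wp2 : listColors col (w :: p2) ⊆ listColors col (p1 ++ w :: p2) :=
        listColors_subset fun x hx => by rw [hpsplit]; exact List.mem_append_right _ hx
      have hsub_p1w : listColors col (p1 ++ [w]) ⊆ listColors col (p1 ++ w :: p2) :=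
        listColors_subset fun x hx => by rw [hpsplit]; exact List.mem_append_left _ hx
      -- q1 : path from v to w
      have hq1 : IsPathFrom A v w ((v :: t1) ++ [w]) := by
        refine ⟨hqc.prefix ⟨t2, by simp⟩, ?_, by simp, List.getLast?_concat⟩
        have hsl : ((v :: t1) ++ [w]).Sublist ((v :: t1) ++ w :: t2) :=
          (List.append_sublist_append_left _).2
            (List.cons_sublist_cons.2 (List.nil_sublist _))
        exact hsl.nodup hqn
      -- q2 : path from w to u
      have hq2 : IsPathFrom A w u (w :: t2) := by
        refine ⟨hqc.suffix ⟨v :: t1, by simp⟩, ?_, rfl, ?_⟩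
        · exact htn.of_append_right
        · exact (List.getLast?_append_cons (v :: t1) w t2).symm.trans hql
      -- the cycle through w :: p2 and t1
      have hcyc : IsCycle A ((w :: p2) ++ t1) :=
        build_cycle (by simpa using hqc) hwp2
          (fun a ha hap => ht1p a ha (by
            rcases List.mem_cons.1 hap with rfl | hap'
            · exact List.mem_append_right _ (by simp)
            · exact List.mem_append_right _ (by simp [hap']))) ht1n
      have hcard := h _ hcyc
      rw [cycle_colors_eq (rfl : (w :: p2).head? = some w) hwp2.2.2.2] at hcard
      have hsubq1 : listColors col ((v :: t1) ++ [w]) ⊆ listColors col (p1 ++ w :: p2) :=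
        (subset_of_union_card_le hcard (listColors_nonempty hwv hwp2)).trans hsub_wp2
      -- p1' : path from u to w
      have hp1ne : p1 ≠ [] := by
        rintro rfl
        simp only [List.nil_append, List.head?_cons, Option.some_inj] at hph
        exact hwu hph
      have hp1' : IsPathFrom A u w (p1 ++ [w]) := by
        refine ⟨hpc.prefix ⟨p2, by simp⟩, ?_, ?_, by simp⟩
        · have : (p1 ++ [w]).Sublist (p1 ++ w :: p2) :=
            (List.append_sublist_append_left _).2 (by simp)
          exact this.nodup hpn
        · rcases p1 with _ | ⟨x1, p1'⟩
          · exact absurd rfl hp1ne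
          · simpa using hph
      -- apply induction hypothesis to q2 and p1'
      have hq2len : (w :: t2).length ≤ n := by
        have := hq
        simp only [List.length_cons, List.length_append] at this ⊢
        omega
      obtain ⟨r, hr, hrsub⟩ := ih (w :: t2) hq2len u w (Ne.symm hwu) hq2 (p1 ++ [w]) hp1'
      -- combine q1 and r
      obtain ⟨q', hq', hq'mem⟩ := path_concat hq1 hr
      refine ⟨q', hq', ?_⟩
      have h1 : listColors col q' ⊆ listColors col ((v :: t1) ++ [w]) ∪ listColors col r :=
        listColors_subset_or hq'mem
      refine h1.trans (Finset.union_subset hsubq1 (hrsub.trans hsub_p1w))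

theorem reach_refl {A : V → V → Prop} (u : V) : Reach A u u :=
  ⟨[u], by simp [IsPathFrom, List.Chain']⟩

theorem reach_trans {A : V → V → Prop} {u w v : V} (h1 : Reach A u w) (h2 : Reach A w v) :
    Reach A u v := by
  obtain ⟨p, hp⟩ := h1
  obtain ⟨q, hq⟩ := h2
  obtain ⟨r, hr, -⟩ := path_concat hp hq
  exact ⟨r, hr⟩

theorem reach_of_chain {A : V → V → Prop} {col : V → V → ℕ} {k : ℕ} :
    ∀ (l : List V) (x y : V), l.Chain' (ClosureArc A col k) →
      l.head? = some x → l.getLast? = some y → Reach A x y := by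
  intro l
  induction l with
  | nil => intro x y _ hx; simp at hx
  | cons a t ih =>
    intro x y hc hx hy
    have hxa : a = x := by simpa using hx
    rcases t with _ | ⟨b, t'⟩
    · have hay : a = y := by simpa using hy
      exact hxa ▸ hay ▸ reach_refl a
    · have h1 : ClosureArc A col k a b := hc.rel_head
      have h2 : Reach A a b := by
        obtain ⟨-, q, hq, -⟩ := h1
        exact ⟨q, hq⟩
      have h3 : Reach A b y :=
        ih b y hc.tail rfl (by rwa [List.getLast?_cons_cons] at hy)
      exact hxa ▸ reach_trans h2 h3

theorem main {A : V → V → Prop} {col : V → V → ℕ} {k : ℕ}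
    (h : ∀ l : List V, IsCycle A l → (cycleColors col l).card ≤ 1) :
    ∀ l : List V, IsCycle (ClosureArc A col k) l →
      ∃ a b, ArcOfCycle l a b ∧ ClosureArc A col k b a := by
  intro l hl
  obtain ⟨hne, hchain, hnodup, hclose⟩ := hl
  rcases l with _ | ⟨a, t⟩
  · exact absurd rfl hne
  rcases t with _ | ⟨b, rest⟩
  · exact absurd (hclose a a rfl rfl).1 (by simp)
  have hab : ClosureArc A col k a b := hchain.rel_head
  obtain ⟨hne_ab, p, hp, hpcard⟩ := hab
  obtain ⟨z, hz⟩ : ∃ z, (a :: b :: rest).getLast? = some z :=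
    Option.isSome_iff_exists.1 (List.getLast?_isSome.2 (by simp))
  have hreach_bz : Reach A b z :=
    reach_of_chain (b :: rest) b z hchain.tail rfl
      (by rwa [List.getLast?_cons_cons] at hz)
  have hza : ClosureArc A col k z a := hclose z a hz rfl
  have hreach_za : Reach A z a := by
    obtain ⟨-, q, hq, -⟩ := hza
    exact ⟨q, hq⟩
  obtain ⟨q, hq⟩ := reach_trans hreach_bz hreach_za
  obtain ⟨q', hq', hsub⟩ := key h q.length q le_rfl a b hne_ab hq p hp
  refine ⟨a, b, Or.inl (by simp), ?_, ?_⟩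
  · exact hne_ab.symm
  · exact ⟨q', hq', le_trans (Finset.card_le_card hsub) hpcard⟩

end StmtAux

/-- If every directed cycle of `D` is monochromatic, then every directed cycle of
the `k`-colored closure of `D` contains a symmetrical arc. -/
theorem stmt_7 (A : V → V → Prop) (col : V → V → ℕ) (k : ℕ)
    (h : ∀ l : List V, IsCycle A l → (cycleColors col l).card ≤ 1) :
    ∀ l : List V, IsCycle (ClosureArc A col k) l →
      ∃ a b, ArcOfCycle l a b ∧ ClosureArc A col k b a := by
  intro l hl
  exact StmtAux.main h l hl
end

section
/- Let D be an arc-colored quasi-transitive digraph and k ≥ 3. If there is a directed path from u to v using at most k colors, and there is no directed path from v to u using at most k colors, then (u,v) is an arc of D. -/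
variable {V : Type*}

lemma reachK_self (A : V → V → Prop) (col : V → V → ℕ) (k : ℕ) (u : V) :
    ReachK A col k u u := by
  refine ⟨[u], ⟨?_, ?_, ?_, ?_⟩, ?_⟩ <;> simp [listColors, IsPathFrom, List.Chain']

lemma colors_card_le (col : V → V → ℕ) (l : List V) :
    (listColors col l).card ≤ (l.zip l.tail).length := by
  simpa [listColors] using List.toFinset_card_le ((l.zip l.tail).map fun p => col p.1 p.2)

lemma reach1 (A : V → V → Prop) (col : V → V → ℕ) (k : ℕ) (hk : 3 ≤ k) {a b : V}
    (hne : a ≠ b) (h : A a b) : ReachK A col k a b := by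
  refine ⟨[a, b], ⟨?_, ?_, ?_, ?_⟩, ?_⟩
  · simp [h, List.Chain']
  · simp [hne]
  · simp
  · simp
  · calc (listColors col [a,b]).card ≤ ([a,b].zip [b]).length := colors_card_le col [a,b]
      _ ≤ k := by simp; omega

lemma reach2 (A : V → V → Prop) (col : V → V → ℕ) (k : ℕ) (hk : 3 ≤ k) {a x b : V}
    (hne : a ≠ b) (h1 : A a x) (h2 : A x b) : ReachK A col k a b := by
  by_cases hx1 : x = a
  · exact reach1 A col k hk hne (hx1 ▸ h2)
  by_cases hx2 : x = b
  · exact reach1 A col k hk hne (hx2 ▸ h1)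
  refine ⟨[a, x, b], ⟨?_, ?_, ?_, ?_⟩, ?_⟩
  · simp [h1, h2, List.Chain']
  · simp [hne, Ne.symm hx1, hx2]
  · simp
  · simp
  · calc (listColors col [a,x,b]).card ≤ ([a,x,b].zip [x,b]).length := colors_card_le col _
      _ ≤ k := by simp; omega

lemma reach3 (A : V → V → Prop) (col : V → V → ℕ) (k : ℕ) (hk : 3 ≤ k) {a x y b : V}
    (hne : a ≠ b) (h1 : A a x) (h2 : A x y) (h3 : A y b) : ReachK A col k a b := by
  by_cases hx1 : x = a
  · exact reach2 A col k hk hne (hx1 ▸ h2) h3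
  by_cases hx2 : x = b
  · exact reach1 A col k hk hne (hx2 ▸ h1)
  by_cases hy1 : y = a
  · exact reach1 A col k hk hne (hy1 ▸ h3)
  by_cases hy2 : y = b
  · exact reach2 A col k hk hne h1 (hy2 ▸ h2)
  by_cases hxy : x = y
  · exact reach2 A col k hk hne h1 (hxy ▸ h3)
  refine ⟨[a, x, y, b], ⟨?_, ?_, ?_, ?_⟩, ?_⟩
  · simp [h1, h2, h3, List.Chain']
  · simp [hne, Ne.symm hx1, hx2, Ne.symm hy1, hy2, hxy]
  · simp
  · simp
  · calc (listColors col [a,x,y,b]).card ≤ ([a,x,y,b].zip [x,y,b]).length := colors_card_le col _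
      _ ≤ k := by simp; omega

/-- In an arc-colored quasi-transitive digraph, for `k ≥ 3`, if there is a directed
path from `u` to `v` using at most `k` colors but no directed path from `v` to `u`
using at most `k` colors, then `(u,v)` is an arc. -/
theorem stmt_11 (A : V → V → Prop) (col : V → V → ℕ)
    (hqt : ∀ u v w : V, u ≠ w → A u v → A v w → A u w ∨ A w u)
    (k : ℕ) (hk : 3 ≤ k) (u v : V)
    (h1 : ReachK A col k u v) (h2 : ¬ ReachK A col k v u) :
    A u v := by
  classical
  by_cases huv : u = v
  · exact absurd (huv ▸ reachK_self A col k v) h2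
  -- walks from u to v of length m
  set Q : ℕ → Prop := fun m =>
    1 ≤ m ∧ ∃ g : ℕ → V, (∀ i, i < m → A (g i) (g (i+1))) ∧ g 0 = u ∧ g m = v with hQdef
  have hex : ∃ m, Q m := by
    obtain ⟨l, ⟨hc, hnd, hh, hl⟩, -⟩ := h1
    have hlne : l ≠ [] := by rintro rfl; simp at hh
    have h2len : 2 ≤ l.length := by
      match l, hlne with
      | [a], _ =>
        simp at hh hl
        exact absurd (hh.symm.trans hl) huv
      | a :: b :: t, _ => simp
    refine ⟨l.length - 1, by omega, fun i => l.getD i v, ?_, ?_, ?_⟩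
    · intro i hi
      have hi1 : i + 1 < l.length := by omega
      show A (l.getD i v) (l.getD (i+1) v)
      rw [List.getD_eq_getElem l v (by omega), List.getD_eq_getElem l v hi1]
      have := List.isChain_iff_getElem.mp hc i (by omega)
      simpa [List.get_eq_getElem] using this
    · show l.getD 0 v = u
      rw [List.getD_eq_getElem l v (by omega)]
      rw [List.head?_eq_head hlne] at hh
      rw [← List.head_eq_getElem]
      exact Option.some.inj hh
      exact hlne
    · show l.getD (l.length - 1) v = v
      rw [List.getD_eq_getElem l v (by omega)]
      rw [List.getLast?_eq_getLast hlne] at hl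
      rw [← List.getLast_eq_getElem]
      exact Option.some.inj hl
      exact hlne
  set n := Nat.find hex with hndef
  obtain ⟨hn1, f, harc, hf0, hfn⟩ : Q n := Nat.find_spec hex
  have hupp : ∀ m, Q m → n ≤ m := fun m hm => Nat.find_le hm
  -- no repeated vertices on a minimal walk
  have hinj : ∀ i j, i < j → j ≤ n → f i ≠ f j := by
    intro i j hij hj heq
    set d := j - i with hd
    have hd1 : 1 ≤ d := by omega
    set m' := n - d with hm'
    have hm'1 : 1 ≤ m' := by
      by_contra h0
      have hi0 : i = 0 := by omega
      have hjn : j = n := by omega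
      rw [hi0, hjn, hf0, hfn] at heq
      exact huv heq
    have hQm' : Q m' := by
      refine ⟨hm'1, fun m => if m ≤ i then f m else f (m + d), ?_, ?_, ?_⟩
      · intro t ht
        show A (if t ≤ i then f t else f (t + d)) (if t + 1 ≤ i then f (t+1) else f (t+1+d))
        by_cases ht1 : t + 1 ≤ i
        · rw [if_pos (by omega : t ≤ i), if_pos ht1]
          exact harc t (by omega)
        · by_cases ht2 : t ≤ i
          · have hti : t = i := by omega
            rw [if_pos ht2, if_neg ht1, hti, heq]
            have e : i + 1 + d = j + 1 := by omega
            rw [e]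
            exact harc j (by omega)
          · rw [if_neg ht2, if_neg (by omega : ¬ t + 1 ≤ i)]
            have e : t + 1 + d = t + d + 1 := by omega
            rw [e]
            exact harc (t + d) (by omega)
      · show (if 0 ≤ i then f 0 else f (0 + d)) = u
        rw [if_pos (by omega : 0 ≤ i)]; exact hf0
      · show (if m' ≤ i then f m' else f (m' + d)) = v
        by_cases hle : m' ≤ i
        · rw [if_pos hle]
          have : m' = i := by omega
          rw [this, heq]
          have : j = n := by omega
          rw [this]; exact hfn
        · rw [if_neg hle]
          have e : m' + d = n := by omega
          rw [e]; exact hfn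
    have := hupp m' hQm'
    omega
  -- no forward chords on a minimal walk
  have hchord : ∀ i j, i + 1 < j → j ≤ n → ¬ A (f i) (f j) := by
    intro i j hij hj hA
    set d := j - i - 1 with hd
    have hd1 : 1 ≤ d := by omega
    set m' := n - d with hm'
    have hm'1 : 1 ≤ m' := by omega
    have hQm' : Q m' := by
      refine ⟨hm'1, fun m => if m ≤ i then f m else f (m + d), ?_, ?_, ?_⟩
      · intro t ht
        show A (if t ≤ i then f t else f (t + d)) (if t + 1 ≤ i then f (t+1) else f (t+1+d))
        by_cases ht1 : t + 1 ≤ i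
        · rw [if_pos (by omega : t ≤ i), if_pos ht1]
          exact harc t (by omega)
        · by_cases ht2 : t ≤ i
          · have hti : t = i := by omega
            rw [if_pos ht2, if_neg ht1, hti]
            have e : i + 1 + d = j := by omega
            rw [e]
            exact hA
          · rw [if_neg ht2, if_neg (by omega : ¬ t + 1 ≤ i)]
            have e : t + 1 + d = t + d + 1 := by omega
            rw [e]
            exact harc (t + d) (by omega)
      · show (if 0 ≤ i then f 0 else f (0 + d)) = u
        rw [if_pos (by omega : 0 ≤ i)]; exact hf0
      · show (if m' ≤ i then f m' else f (m' + d)) = v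
        rw [if_neg (by omega : ¬ m' ≤ i)]
        have e : m' + d = n := by omega
        rw [e]; exact hfn
    have := hupp m' hQm'
    omega
  -- back arcs of gap 2
  have hB2 : ∀ i, i + 2 ≤ n → A (f (i+2)) (f i) := by
    intro i hi
    rcases hqt (f i) (f (i+1)) (f (i+2)) (hinj i (i+2) (by omega) hi)
      (harc i (by omega)) (harc (i+1) (by omega)) with h | h
    · exact absurd h (hchord i (i+2) (by omega) hi)
    · exact h
  -- chained back arcs of even gap
  have hback : ∀ j, 1 ≤ j → 2*j ≤ n → A (f n) (f (n - 2*j)) := by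
    intro j
    induction j with
    | zero => omega
    | succ j ih =>
      intro hj1 hj2
      by_cases hj : j = 0
      · subst hj
        have h := hB2 (n - 2) (by omega)
        have e : n - 2 + 2 = n := by omega
        rw [e] at h
        have e2 : n - 2*1 = n - 2 := by omega
        rw [e2]
        exact h
      · have hih := ih (by omega) (by omega)
        have hb := hB2 (n - 2*(j+1)) (by omega)
        have e : n - 2*(j+1) + 2 = n - 2*j := by omega
        rw [e] at hb
        have hne : f n ≠ f (n - 2*(j+1)) :=
          (hinj (n - 2*(j+1)) n (by omega) le_rfl).symm
        rcases hqt (f n) (f (n - 2*j)) (f (n - 2*(j+1))) hne hih hb with h | h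
        · exact h
        · exact absurd h (hchord (n - 2*(j+1)) n (by omega) le_rfl)
  -- conclude
  rcases Nat.lt_or_ge n 2 with hn2 | hn2
  · have hne1 : n = 1 := by omega
    have h := harc 0 (by omega)
    rw [hf0] at h
    rw [hne1] at hfn
    rw [hfn] at h
    exact h
  · exfalso
    apply h2
    rcases Nat.even_or_odd n with he | ho
    · obtain ⟨m, hm⟩ := he
      by_cases hn2' : n = 2
      · have h := hback 1 le_rfl (by omega)
        have e : n - 2*1 = 0 := by omega
        rw [e, hf0, hfn] at h
        exact reach1 A col k hk (Ne.symm huv) h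
      · have h := hback (m - 1) (by omega) (by omega)
        have e : n - 2*(m-1) = 2 := by omega
        rw [e, hfn] at h
        have h0 := hB2 0 (by omega)
        rw [hf0] at h0
        exact reach2 A col k hk (Ne.symm huv) h h0
    · obtain ⟨m, hm⟩ := ho
      have h := hback m (by omega) (by omega)
      have e : n - 2*m = 1 := by omega
      rw [e, hfn] at h
      have h12 := harc 1 (by omega)
      have h0 := hB2 0 (by omega)
      rw [hf0] at h0
      have e0 : (0:ℕ) + 2 = 2 := rfl
      rw [e0] at h0
      exact reach3 A col k hk (Ne.symm huv) h h12 h0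
end

section
/- Let D be an arc-colored 3-quasi-transitive digraph. Then D has a k-colored kernel for every k ≥ 4. -/
variable {V : Type*}

namespace QT3

/-- walks of length `n` in the digraph `A` -/
def Wk (A : V → V → Prop) : ℕ → V → V → Prop
  | 0, u, v => u = v
  | n+1, u, v => ∃ w, A u w ∧ Wk A n w v

variable {A : V → V → Prop}

@[simp] lemma wk_zero {u v : V} : Wk A 0 u v ↔ u = v := Iff.rfl
@[simp] lemma wk_succ {n : ℕ} {u v : V} : Wk A (n+1) u v ↔ ∃ w, A u w ∧ Wk A n w v := Iff.rfl

lemma wk_trans {m n : ℕ} {u v w : V} (h1 : Wk A m u v) (h2 : Wk A n v w) :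
    Wk A (m + n) u w := by
  induction m generalizing u with
  | zero => rw [wk_zero] at h1; subst h1; simpa using h2
  | succ m ih =>
    obtain ⟨z, hz, hw⟩ := h1
    rw [Nat.succ_add]
    exact ⟨z, hz, ih hw⟩

/-- reachability by a walk -/
def Rch (A : V → V → Prop) (u v : V) : Prop := ∃ n, Wk A n u v

/-- short reachability: a walk of length at most 4 -/
def Sh (A : V → V → Prop) (u v : V) : Prop := ∃ n, n ≤ 4 ∧ Wk A n u v

lemma rch_refl (u : V) : Rch A u u := ⟨0, rfl⟩

lemma rch_trans {u v w : V} (h1 : Rch A u v) (h2 : Rch A v w) : Rch A u w := by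
  obtain ⟨m, h1⟩ := h1; obtain ⟨n, h2⟩ := h2; exact ⟨m + n, wk_trans h1 h2⟩

lemma wk_to_fun {m : ℕ} {u v : V} (h : Wk A m u v) :
    ∃ x : ℕ → V, x 0 = u ∧ x m = v ∧ ∀ i, i < m → A (x i) (x (i+1)) := by
  induction m generalizing u with
  | zero => exact ⟨fun _ => v, h.symm, rfl, by omega⟩
  | succ m ih =>
    obtain ⟨w, hw, hWk⟩ := h
    obtain ⟨x, hx0, hxm, hxa⟩ := ih hWk
    refine ⟨fun i => Nat.casesOn i u (fun j => x j), rfl, hxm, ?_⟩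
    intro i hi
    cases i with
    | zero => simpa [hx0] using hw
    | succ j => exact hxa j (by omega)

lemma fun_to_wk {m : ℕ} (x : ℕ → V) (harc : ∀ i, i < m → A (x i) (x (i+1))) :
    ∀ t i, i + t ≤ m → Wk A t (x i) (x (i+t)) := by
  intro t
  induction t with
  | zero => intro i _; simp
  | succ t ih =>
    intro i h
    refine ⟨x (i+1), harc i (by omega), ?_⟩
    have := ih (i+1) (by omega)
    have he : i + 1 + t = i + (t+1) := by omega
    rwa [he] at this

variable (h3qt : ∀ a b c d : V, a ≠ b → a ≠ c → a ≠ d → b ≠ c → b ≠ d → c ≠ d →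
      A a b → A b c → A c d → A a d ∨ A d a)

/-- structure of a minimal-length walk -/
lemma min_walk_facts {m : ℕ} {u v : V} (hm : Wk A m u v)
    (hmin : ∀ n, n < m → ¬ Wk A n u v) :
    ∃ x : ℕ → V, x 0 = u ∧ x m = v ∧ (∀ i, i < m → A (x i) (x (i+1))) ∧
      (∀ i j, i < j → j ≤ m → x i ≠ x j) ∧
      (∀ i j n, i ≤ j → j ≤ m → Wk A n (x i) (x j) → i + n + (m - j) < m → False) := by
  obtain ⟨x, hx0, hxm, hxa⟩ := wk_to_fun hm
  have hseg : ∀ i j, i ≤ j → j ≤ m → Wk A (j - i) (x i) (x j) := by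
    intro i j hij hjm
    have := fun_to_wk x hxa (j - i) i (by omega)
    rwa [show i + (j - i) = j by omega] at this
  have hsplice : ∀ i j n, i ≤ j → j ≤ m → Wk A n (x i) (x j) → i + n + (m - j) < m → False := by
    intro i j n hij hjm hw hlt
    have h1 : Wk A i u (x i) := by
      have := hseg 0 i (by omega) (by omega)
      simpa [hx0] using this
    have h2 : Wk A (m - j) (x j) v := by
      have := hseg j m hjm le_rfl
      rwa [hxm] at this
    exact hmin (i + n + (m - j)) hlt (wk_trans (wk_trans h1 hw) h2)
  refine ⟨x, hx0, hxm, hxa, ?_, hsplice⟩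
  intro i j hij hjm he
  exact hsplice i j 0 (by omega) hjm (by simpa using he) (by omega)

include h3qt in
/-- minimal walk of length 3 forces the back arc -/
lemma S3 {u v : V} (hm : Wk A 3 u v) (hmin : ∀ n, n < 3 → ¬ Wk A n u v) : A v u := by
  obtain ⟨x, hx0, hxm, hxa, hne, _⟩ := min_walk_facts hm hmin
  have a01 := hxa 0 (by omega)
  have a12 := hxa 1 (by omega)
  have a23 := hxa 2 (by omega)
  have h := h3qt (x 0) (x 1) (x 2) (x 3)
    (hne 0 1 (by omega) (by omega)) (hne 0 2 (by omega) (by omega))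
    (hne 0 3 (by omega) (by omega)) (hne 1 2 (by omega) (by omega))
    (hne 1 3 (by omega) (by omega)) (hne 2 3 (by omega) (by omega)) a01 a12 a23
  rcases h with h | h
  · exact absurd (⟨v, by rwa [hx0, hxm] at h, rfl⟩ : Wk A 1 u v) (hmin 1 (by omega))
  · rwa [hx0, hxm] at h

include h3qt in
/-- minimal walk of length 5 forces the back arc -/
lemma S5 {u v : V} (hm : Wk A 5 u v) (hmin : ∀ n, n < 5 → ¬ Wk A n u v) : A v u := by
  obtain ⟨x, hx0, hxm, hxa, hne, hsp⟩ := min_walk_facts hm hmin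
  have h30 : A (x 3) (x 0) := by
    refine S3 h3qt ?_ ?_
    · have := fun_to_wk x hxa 3 0 (by omega); simpa using this
    · intro n hn hw
      exact hsp 0 3 n (by omega) (by omega) hw (by omega)
  have h52 : A (x 5) (x 2) := by
    refine S3 h3qt ?_ ?_
    · have := fun_to_wk x hxa 3 2 (by omega); simpa using this
    · intro n hn hw
      exact hsp 2 5 n (by omega) (by omega) hw (by omega)
  have a23 := hxa 2 (by omega)
  have h := h3qt (x 5) (x 2) (x 3) (x 0)
    (fun he => hne 2 5 (by omega) (by omega) he.symm)
    (fun he => hne 3 5 (by omega) (by omega) he.symm)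
    (fun he => hne 0 5 (by omega) (by omega) he.symm)
    (hne 2 3 (by omega) (by omega))
    (fun he => hne 0 2 (by omega) (by omega) he.symm)
    (fun he => hne 0 3 (by omega) (by omega) he.symm)
    h52 a23 h30
  rcases h with h | h
  · rwa [hx0, hxm] at h
  · exact absurd (⟨v, by rwa [hx0, hxm] at h, rfl⟩ : Wk A 1 u v) (hmin 1 (by omega))

include h3qt in
/-- if u reaches v but not shortly, there is u' with an arc v→u' that is still far into v -/
lemma far_step {u v : V} (hr : Rch A u v) (hns : ¬ Sh A u v) :
    ∃ u', A v u' ∧ Rch A u' v ∧ ¬ Sh A u' v := by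
  classical
  have hex : ∃ n, Wk A n u v := hr
  set m := Nat.find hex with hmdef
  have hm : Wk A m u v := Nat.find_spec hex
  have hmin : ∀ n, n < m → ¬ Wk A n u v := fun n hn => Nat.find_min hex hn
  have hm5 : 5 ≤ m := by
    by_contra h
    exact hns ⟨m, by omega, hm⟩
  obtain ⟨x, hx0, hxm, hxa, hne, hsp⟩ := min_walk_facts hm hmin
  refine ⟨x (m - 5), ?_, ?_, ?_⟩
  · have hw5 : Wk A 5 (x (m-5)) (x m) := by
      have := fun_to_wk x hxa 5 (m-5) (by omega)
      rwa [show m - 5 + 5 = m by omega] at this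
    have hmin5 : ∀ n, n < 5 → ¬ Wk A n (x (m-5)) (x m) := by
      intro n hn hw
      exact hsp (m-5) m n (by omega) le_rfl hw (by omega)
    have := S5 h3qt hw5 hmin5
    rwa [hxm] at this
  · refine ⟨5, ?_⟩
    have := fun_to_wk x hxa 5 (m-5) (by omega)
    rwa [show m - 5 + 5 = m by omega, hxm] at this
  · rintro ⟨n, hn4, hw⟩
    rw [← hxm] at hw
    exact hsp (m-5) m n (by omega) le_rfl hw (by omega)

include h3qt in
/-- there is no cycle each of whose consecutive pairs is far apart backwards -/
lemma no_bad_cycle (L : ℕ) (hL : 2 ≤ L) (c : ℕ → V)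
    (hinj : ∀ a b, c a = c b → a % L = b % L)
    (hper : ∀ n, c (n + L) = c n)
    (harc : ∀ n, A (c n) (c (n+1)))
    (hfar : ∀ n, ¬ Sh A (c (n+1)) (c n)) : False := by
  have hL0 : 0 < L := by omega
  have cw : ∀ t n, Wk A t (c n) (c (n + t)) := by
    intro t
    induction t with
    | zero => intro n; simp
    | succ t ih =>
      intro n
      refine ⟨c (n+1), harc n, ?_⟩
      have := ih (n+1)
      rwa [show n + 1 + t = n + (t+1) by omega] at this
  have modne : ∀ n d, 0 < d → d < L → c (n + d) ≠ c n := by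
    intro n d hd0 hdL he
    have h := hinj (n + d) n he
    have : (n : ℕ) ≡ n + d [MOD L] := h.symm
    have hdvd : L ∣ d := by
      have := (Nat.modEq_iff_dvd' (by omega : n ≤ n + d)).mp this
      simpa using this
    exact absurd (Nat.le_of_dvd hd0 hdvd) (by omega)
  by_cases hL5 : L ≤ 5
  · refine hfar 0 ⟨L - 1, by omega, ?_⟩
    have := cw (L - 1) 1
    rw [show 1 + (L - 1) = 0 + L by omega, hper 0] at this
    exact this
  · push_neg at hL5
    have hL6 : 6 ≤ L := hL5
    have J : ∀ a : ℕ, 2*a + 3 ≤ L - 3 → ∀ n, A (c n) (c (n + (2*a+3))) := by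
      intro a
      induction a with
      | zero =>
        intro hle n
        have h := h3qt (c n) (c (n+1)) (c (n+2)) (c (n+3))
          (fun he => modne n 1 (by omega) (by omega) he.symm)
          (fun he => modne n 2 (by omega) (by omega) he.symm)
          (fun he => modne n 3 (by omega) (by omega) he.symm)
          (by have := modne (n+1) 1 (by omega) (by omega)
              simpa [show n+1+1 = n+2 by omega] using fun he => this he.symm)
          (by have := modne (n+1) 2 (by omega) (by omega)
              simpa [show n+1+2 = n+3 by omega] using fun he => this he.symm)
          (by have := modne (n+2) 1 (by omega) (by omega)
              simpa [show n+2+1 = n+3 by omega] using fun he => this he.symm)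
          (harc n) (harc (n+1)) (harc (n+2))
        rcases h with h | h
        · simpa using h
        · exfalso
          refine hfar (n+2) ⟨3, by omega, ?_⟩
          have w1 : Wk A 1 (c (n+3)) (c n) := ⟨c n, h, rfl⟩
          have w2 : Wk A 2 (c n) (c (n+2)) := cw 2 n
          have := wk_trans w1 w2
          simpa [show n+2+1 = n+3 by omega] using this
      | succ a ih =>
        intro hle n
        have hj : 2*a + 3 ≤ L - 3 := by omega
        set j := 2*a + 3 with hjdef
        have hja : A (c n) (c (n + j)) := ih hj n
        have h := h3qt (c n) (c (n+j)) (c (n+j+1)) (c (n+j+2))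
          (fun he => modne n j (by omega) (by omega) he.symm)
          (fun he => modne n (j+1) (by omega) (by omega)
            (by rw [show n+(j+1) = n+j+1 by omega]; exact he.symm))
          (fun he => modne n (j+2) (by omega) (by omega)
            (by rw [show n+(j+2) = n+j+2 by omega]; exact he.symm))
          (fun he => modne (n+j) 1 (by omega) (by omega) he.symm)
          (fun he => modne (n+j) 2 (by omega) (by omega)
            (by rw [show n+j+2 = n+j+2 by omega]; exact he.symm))
          (fun he => modne (n+j+1) 1 (by omega) (by omega) he.symm)
          hja (harc (n+j)) (harc (n+j+1))
        rcases h with h | h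
        · rwa [show n + (2*(a+1)+3) = n+j+2 by omega]
        · exfalso
          refine hfar (n+j+1) ⟨3, by omega, ?_⟩
          have w1 : Wk A 1 (c (n+j+2)) (c n) := ⟨c n, h, rfl⟩
          have w2 : Wk A 1 (c n) (c (n+j)) := ⟨c (n+j), hja, rfl⟩
          have w3 : Wk A 1 (c (n+j)) (c (n+j+1)) := ⟨c (n+j+1), harc (n+j), rfl⟩
          have := wk_trans (wk_trans w1 w2) w3
          simpa using this
    rcases Nat.even_or_odd L with ⟨b, hb⟩ | ⟨b, hb⟩
    · have hb3 : 3 ≤ b := by omega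
      have harcL : A (c 1) (c (1 + (L-3))) := by
        have := J (b - 3) (by omega) 1
        rwa [show 2*(b-3)+3 = L - 3 by omega] at this
      refine hfar 0 ⟨3, by omega, ?_⟩
      have w1 : Wk A 1 (c 1) (c (1 + (L-3))) := ⟨_, harcL, rfl⟩
      have w2 : Wk A 2 (c (1 + (L-3))) (c (1 + (L-3) + 2)) := cw 2 _
      have := wk_trans w1 w2
      rw [show 1 + (L-3) + 2 = 0 + L by omega, hper 0] at this
      exact this
    · have hb3 : 3 ≤ b := by omega
      have harcL : A (c 1) (c (1 + (L-4))) := by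
        have := J (b - 3) (by omega) 1
        rwa [show 2*(b-3)+3 = L - 4 by omega] at this
      refine hfar 0 ⟨4, by omega, ?_⟩
      have w1 : Wk A 1 (c 1) (c (1 + (L-4))) := ⟨_, harcL, rfl⟩
      have w2 : Wk A 3 (c (1 + (L-4))) (c (1 + (L-4) + 3)) := cw 3 _
      have := wk_trans w1 w2
      rw [show 1 + (L-4) + 3 = 0 + L by omega, hper 0] at this
      exact this

include h3qt in
/-- every vertex reaches a vertex all of whose in-reachers reach it shortly -/
lemma king [Fintype V] (t : V) :
    ∃ v, Rch A t v ∧ ∀ u, Rch A u v → Sh A u v := by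
  classical
  by_contra hcon
  push_neg at hcon
  have hstep : ∀ v, Rch A t v → ∃ u', A v u' ∧ Rch A u' v ∧ ¬ Sh A u' v := by
    intro v hv
    obtain ⟨u, hu1, hu2⟩ := hcon v hv
    exact far_step h3qt hu1 hu2
  set F : V → V := fun v =>
    if h : ∃ u', A v u' ∧ Rch A u' v ∧ ¬ Sh A u' v then h.choose else v with hF
  set g : ℕ → V := fun n => F^[n] t with hg
  have hg0 : g 0 = t := rfl
  have hgs : ∀ n, g (n+1) = F (g n) := by
    intro n; simp [hg, Function.iterate_succ_apply']
  have hinv : ∀ n, Rch A t (g n) ∧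
      (∀ m, m ≤ n → A (g m) (g (m+1)) ∧ ¬ Sh A (g (m+1)) (g m)) := by
    intro n
    induction n with
    | zero =>
      constructor
      · exact rch_refl t
      · intro m hm
        interval_cases m
        have hex := hstep (g 0) (rch_refl t)
        rw [hgs 0, hF]
        simp only [dif_pos hex]
        exact ⟨hex.choose_spec.1, hex.choose_spec.2.2⟩
    | succ n ih =>
      have hrn : Rch A t (g (n+1)) := by
        have harcn := (ih.2 n le_rfl).1
        exact rch_trans ih.1 ⟨1, g (n+1), harcn, rfl⟩
      refine ⟨hrn, ?_⟩
      intro m hm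
      rcases Nat.lt_or_ge m (n+1) with h | h
      · exact ih.2 m (by omega)
      · have hmeq : m = n + 1 := by omega
        subst hmeq
        have hex := hstep (g (n+1)) hrn
        rw [hgs (n+1), hF]
        simp only [dif_pos hex]
        exact ⟨hex.choose_spec.1, hex.choose_spec.2.2⟩
  have harcs : ∀ n, A (g n) (g (n+1)) := fun n => ((hinv n).2 n le_rfl).1
  have hfars : ∀ n, ¬ Sh A (g (n+1)) (g n) := fun n => ((hinv n).2 n le_rfl).2
  obtain ⟨a, b, hab, heq⟩ :
      ∃ a b : Fin (Fintype.card V + 1), a ≠ b ∧ g a = g b := by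
    have hcard : Fintype.card V < Fintype.card (Fin (Fintype.card V + 1)) := by simp
    obtain ⟨a, b, hab, heq⟩ :=
      Fintype.exists_ne_map_eq_of_card_lt (fun i : Fin (Fintype.card V + 1) => g i) hcard
    exact ⟨a, b, hab, heq⟩
  obtain ⟨i, j, hij, hgij⟩ : ∃ i j : ℕ, i < j ∧ g i = g j := by
    rcases lt_or_gt_of_ne hab with h | h
    · exact ⟨a, b, h, heq⟩
    · exact ⟨b, a, h, heq.symm⟩
  have hPex : ∃ d, 0 < d ∧ ∃ i, g i = g (i + d) :=
    ⟨j - i, by omega, i, by rw [show i + (j - i) = j by omega]; exact hgij⟩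
  set L := Nat.find hPex with hLdef
  obtain ⟨hL0, i₀, hi₀⟩ := Nat.find_spec hPex
  have hLmin : ∀ d, d < L → ¬ (0 < d ∧ ∃ i, g i = g (i + d)) :=
    fun d hd => Nat.find_min hPex hd
  have hL2 : 2 ≤ L := by
    rcases Nat.lt_or_ge L 2 with h | h
    · exfalso
      have hL1 : L = 1 := by omega
      have hi1 : g i₀ = g (i₀ + L) := hi₀
      rw [hL1] at hi1
      exact hfars i₀ (by rw [← hi1]; exact ⟨0, by omega, rfl⟩)
    · exact h
  set c : ℕ → V := fun n => g (i₀ + n % L) with hc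
  have hper : ∀ n, c (n + L) = c n := by
    intro n; simp [hc, Nat.add_mod_right]
  have hinj : ∀ a b, c a = c b → a % L = b % L := by
    intro a b he
    by_contra hne
    rcases Nat.lt_or_ge (a % L) (b % L) with h | h
    · exact hLmin (b % L - a % L) (by have := Nat.mod_lt b (by omega : 0 < L); omega)
        ⟨by omega, i₀ + a % L,
          by rw [show i₀ + a % L + (b % L - a % L) = i₀ + b % L by omega]; exact he⟩
    · have h' : b % L < a % L := by omega
      exact hLmin (a % L - b % L) (by have := Nat.mod_lt a (by omega : 0 < L); omega)
        ⟨by omega, i₀ + b % L,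
          by rw [show i₀ + b % L + (a % L - b % L) = i₀ + a % L by omega]; exact he.symm⟩
  have hshift : ∀ n, g (i₀ + (n+1) % L) = g (i₀ + n % L + 1) := by
    intro n
    have hmod : (n+1) % L = (n % L + 1) % L := by
      conv_lhs => rw [Nat.add_mod, Nat.one_mod_eq_one.mpr (by omega)]
    rcases Nat.lt_or_ge (n % L + 1) L with h | h
    · rw [hmod, Nat.mod_eq_of_lt h, ← Nat.add_assoc]
    · have hLe : n % L + 1 = L := by have := Nat.mod_lt n (by omega : 0 < L); omega
      rw [hmod, hLe, Nat.mod_self]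
      rw [show i₀ + n % L + 1 = i₀ + L by omega]
      simpa using hi₀
  have harc' : ∀ n, A (c n) (c (n+1)) := by
    intro n
    rw [hc]
    simp only
    rw [hshift n]
    exact harcs (i₀ + n % L)
  have hfar' : ∀ n, ¬ Sh A (c (n+1)) (c n) := by
    intro n
    rw [hc]
    simp only
    rw [hshift n]
    exact hfars (i₀ + n % L)
  exact no_bad_cycle h3qt L hL2 c hinj hper harc' hfar'

omit h3qt

lemma getLast?_append_right {s t : List V} (h : t ≠ []) :
    (s ++ t).getLast? = t.getLast? := by
  rw [List.getLast?_append]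
  cases ht : t.getLast? with
  | none => exact absurd (List.getLast?_eq_none_iff.mp ht) h
  | some x => rfl

lemma walk_to_path {n : ℕ} {u v : V} (h : Wk A n u v) :
    ∃ l, IsPathFrom A u v l ∧ l.length ≤ n + 1 := by
  induction n generalizing u with
  | zero =>
    rw [wk_zero] at h; subst h
    exact ⟨[u], ⟨List.isChain_singleton u, List.nodup_singleton u, rfl, rfl⟩, le_rfl⟩
  | succ n ih =>
    obtain ⟨w, hw, hWk⟩ := h
    obtain ⟨l, ⟨hc, hnd, hh, hl⟩, hlen⟩ := ih hWk
    by_cases hu : u ∈ l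
    · obtain ⟨s, t, rfl⟩ := List.append_of_mem hu
      refine ⟨u :: t, ⟨?_, ?_, rfl, ?_⟩, ?_⟩
      · exact hc.suffix ⟨s, rfl⟩
      · exact hnd.sublist (List.sublist_append_right s (u :: t))
      · rw [← hl]
        exact (getLast?_append_right (by simp)).symm
      · simp only [List.length_append, List.length_cons] at hlen ⊢
        omega
    · refine ⟨u :: l, ⟨?_, ?_, rfl, ?_⟩, ?_⟩
      · change List.IsChain A (u :: l); rw [List.isChain_cons]
        refine ⟨?_, hc⟩
        intro y hy
        rw [hh] at hy
        simp at hy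
        rwa [hy] at hw
      · exact List.nodup_cons.mpr ⟨hu, hnd⟩
      · have hne : l ≠ [] := by
          intro he; rw [he] at hh; simp at hh
        rw [show u :: l = [u] ++ l from rfl]
        rw [getLast?_append_right hne]
        exact hl
      · simpa using Nat.add_le_add_right hlen 1

lemma chain_to_wk : ∀ (l : List V) (u v : V), l.Chain' A → l.head? = some u →
    l.getLast? = some v → Wk A (l.length - 1) u v := by
  intro l
  induction l with
  | nil => intro u v _ h; simp at h
  | cons a l ih =>
    intro u v hc hh hl
    cases l with
    | nil =>
      simp at hh hl
      subst hh; subst hl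
      simp
    | cons b l' =>
      change List.IsChain A (a :: b :: l') at hc; rw [List.isChain_cons_cons] at hc
      simp only [List.head?] at hh
      have hu : u = a := by simpa using hh.symm
      rw [List.getLast?_cons_cons] at hl
      have := ih b v hc.2 rfl hl
      subst hu
      refine ⟨b, hc.1, ?_⟩
      simpa using this

lemma sh_reachK {col : V → V → ℕ} {k : ℕ} (hk : 4 ≤ k) {u v : V} (h : Sh A u v) :
    ReachK A col k u v := by
  obtain ⟨n, hn, hw⟩ := h
  obtain ⟨l, hp, hlen⟩ := walk_to_path hw
  refine ⟨l, hp, le_trans ?_ hk⟩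
  calc (listColors col l).card ≤ ((l.zip l.tail).map fun p => col p.1 p.2).length :=
        List.toFinset_card_le _
    _ = (l.zip l.tail).length := List.length_map _
    _ ≤ 4 := by
        rw [List.length_zip, List.length_tail]
        omega

lemma reachK_rch {col : V → V → ℕ} {k : ℕ} {u v : V} (h : ReachK A col k u v) :
    Rch A u v := by
  obtain ⟨l, ⟨hc, _, hh, hl⟩, _⟩ := h
  exact ⟨l.length - 1, chain_to_wk l u v hc hh hl⟩

lemma terminal_exists [Fintype V] (x : V) :
    ∃ t, Rch A x t ∧ ∀ w, Rch A t w → Rch A w t := by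
  classical
  suffices H : ∀ N (x : V), (Finset.univ.filter fun y => Rch A x y).card ≤ N →
      ∃ t, Rch A x t ∧ ∀ w, Rch A t w → Rch A w t by
    exact H _ x le_rfl
  intro N
  induction N with
  | zero =>
    intro x hx
    exfalso
    have : x ∈ Finset.univ.filter fun y => Rch A x y := by
      simp [rch_refl]
    have := Finset.card_pos.mpr ⟨x, this⟩
    omega
  | succ N ih =>
    intro x hx
    by_cases hterm : ∀ w, Rch A x w → Rch A w x
    · exact ⟨x, rch_refl x, hterm⟩
    · push_neg at hterm
      obtain ⟨w, hw, hnw⟩ := hterm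
      have hss : (Finset.univ.filter fun y => Rch A w y) ⊂
          (Finset.univ.filter fun y => Rch A x y) := by
        constructor
        · intro y hy
          simp only [Finset.mem_filter, Finset.mem_univ, true_and] at hy ⊢
          exact rch_trans hw hy
        · intro hsub
          have : x ∈ Finset.univ.filter fun y => Rch A w y := by
            apply hsub
            simp [rch_refl]
          simp only [Finset.mem_filter, Finset.mem_univ, true_and] at this
          exact hnw this
      have hcard : (Finset.univ.filter fun y => Rch A w y).card ≤ N := by
        have := Finset.card_lt_card hss
        omega
      obtain ⟨t, ht1, ht2⟩ := ih w hcard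
      exact ⟨t, rch_trans hw ht1, ht2⟩

end QT3

/-- Every arc-colored `3`-quasi-transitive digraph has a `k`-colored kernel for every
`k ≥ 4`. -/

theorem stmt_15 [Fintype V] [Nonempty V] (A : V → V → Prop) (col : V → V → ℕ)
    (h3qt : ∀ a b c d : V, a ≠ b → a ≠ c → a ≠ d → b ≠ c → b ≠ d → c ≠ d →
      A a b → A b c → A c d → A a d ∨ A d a) :
    ∀ k : ℕ, 4 ≤ k → ∃ K : Set V, IsKColoredKernel A col k K := by
  classical
  intro k hk
  set e := Fintype.equivFin V with he
  set KS : Set V := {v | (∀ w, QT3.Rch A v w → QT3.Rch A w v) ∧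
    ∀ u, QT3.Rch A u v → QT3.Sh A u v} with hKS
  set K : Set V := {v | v ∈ KS ∧ ∀ w ∈ KS, (QT3.Rch A v w ∧ QT3.Rch A w v) → e v ≤ e w} with hK
  have reach_KS : ∀ x : V, ∃ v ∈ KS, QT3.Rch A x v := by
    intro x
    obtain ⟨t, hxt, hterm⟩ := QT3.terminal_exists (A := A) x
    obtain ⟨v, htv, hking⟩ := QT3.king h3qt t
    refine ⟨v, ⟨?_, hking⟩, QT3.rch_trans hxt htv⟩
    intro w hvw
    exact QT3.rch_trans (hterm w (QT3.rch_trans htv hvw)) htv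
  have key_min : ∀ w ∈ KS, ∃ v ∈ K, QT3.Rch A w v ∧ QT3.Rch A v w := by
    intro w hw
    set S : Finset V := Finset.univ.filter
      (fun y => y ∈ KS ∧ QT3.Rch A w y ∧ QT3.Rch A y w) with hS
    have hSne : S.Nonempty := ⟨w, by simp [hS, hw, QT3.rch_refl]⟩
    obtain ⟨v, hvS, hvmin⟩ := Finset.exists_min_image S e hSne
    simp only [hS, Finset.mem_filter, Finset.mem_univ, true_and] at hvS
    refine ⟨v, ⟨hvS.1, ?_⟩, hvS.2.1, hvS.2.2⟩
    intro w' hw' hmut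
    refine hvmin w' ?_
    simp only [hS, Finset.mem_filter, Finset.mem_univ, true_and]
    exact ⟨hw', QT3.rch_trans hvS.2.1 hmut.1, QT3.rch_trans hmut.2 hvS.2.2⟩
  refine ⟨K, ?_, ?_⟩
  · intro u hu v hv huv hRK
    have hr : QT3.Rch A u v := QT3.reachK_rch hRK
    have hterm_u : ∀ w, QT3.Rch A u w → QT3.Rch A w u := hu.1.1
    have hvu : QT3.Rch A v u := hterm_u v hr
    have h1 : e u ≤ e v := hu.2 v hv.1 ⟨hr, hvu⟩
    have h2 : e v ≤ e u := hv.2 u hu.1 ⟨hvu, hr⟩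
    exact huv (e.injective (le_antisymm h1 h2))
  · intro x hx
    obtain ⟨w, hwKS, hxw⟩ := reach_KS x
    obtain ⟨v, hvK, hwv, hvw⟩ := key_min w hwKS
    have hxv : QT3.Rch A x v := QT3.rch_trans hxw hwv
    refine ⟨v, hvK, ?_⟩
    exact QT3.sh_reachK hk (hvK.1.2 x hxv)
end

section
/- Let D be an arc-colored locally out-tournament digraph such that every arc of D belongs to a directed cycle and every directed cycle of D uses at most k colors. If there is a directed path from u to v, then there is a directed path from v to u using at most k colors. -/
variable {V : Type*}

section Aux
variable {A : V → V → Prop} {col : V → V → ℕ} {k : ℕ}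

private lemma zipTailPrefix : ∀ (p r : List V), (p.zip p.tail) <+: ((p ++ r).zip (p ++ r).tail)
  | [], r => by simp
  | [a], r => by simp
  | a :: b :: t, r => by
    have h := zipTailPrefix (b :: t) r
    simpa [List.cons_prefix_cons] using h

private lemma cycleRot {l₁ l₂ : List V} {x : V} (h : IsCycle A (l₁ ++ x :: l₂)) :
    IsCycle A (x :: (l₂ ++ l₁)) := by
  obtain ⟨-, hc, hn, hcl⟩ := h
  rcases eq_or_ne l₁ [] with rfl | hl₁
  · exact ⟨by simp, by simpa using hc, by simpa using hn, by simpa using hcl⟩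
  refine ⟨by simp, ?_, ?_, ?_⟩
  · simp only [List.Chain'] at hc ⊢
    rw [List.isChain_append] at hc
    obtain ⟨hc₁, hc₂, hlink⟩ := hc
    rw [show x :: (l₂ ++ l₁) = (x :: l₂) ++ l₁ by simp, List.isChain_append]
    refine ⟨hc₂, hc₁, ?_⟩
    intro a ha b hb
    apply hcl a b
    · rw [List.getLast?_append_of_ne_nil _ (by simp)]; exact ha
    · rw [List.head?_append_of_ne_nil _ hl₁]; exact hb
  · have : (x :: (l₂ ++ l₁)).Perm (l₁ ++ x :: l₂) :=
      ((List.perm_append_comm).cons x).trans List.perm_middle.symm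
    exact this.nodup_iff.mpr hn
  · intro a b ha hb
    rw [List.head?_cons] at hb
    rw [show x :: (l₂ ++ l₁) = (x :: l₂) ++ l₁ by simp,
      List.getLast?_append_of_ne_nil _ hl₁] at ha
    simp only [List.Chain'] at hc
    rw [List.isChain_append] at hc
    obtain ⟨hc₁, hc₂, hlink⟩ := hc
    injection hb with hb'
    subst hb'
    exact hlink a ha _ rfl

private lemma insSplit
    (hout : ∀ u v w : V, v ≠ w → A u v → A u w → (A v w ↔ ¬ A w v)) (y : V) :
    ∀ l : List V, l.Chain' A → (∀ z, l.head? = some z → A z y) → y ∉ l →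
      (∀ z ∈ l, A z y) ∨ ∃ l₁ a b l₂, l = l₁ ++ a :: b :: l₂ ∧ A a y ∧ A y b := by
  intro l
  induction l with
  | nil => intro _ _ _; left; simp
  | cons a t ih =>
    intro hc h0 hy
    have hay : A a y := h0 a rfl
    match t, hc, hy, ih with
    | [], _, _, _ => left; simpa using hay
    | b :: t', hc, hy, ih =>
      have hab : A a b := (List.isChain_cons_cons.mp hc).1
      have hby : b ≠ y := by simp only [List.mem_cons] at hy; tauto
      have hiff := hout a b y hby hab hay
      by_cases hyb : A y b
      · exact Or.inr ⟨[], a, b, t', by simp, hay, hyb⟩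
      · have hb : A b y := hiff.mpr hyb
        have hy' : y ∉ b :: t' := fun h => hy (List.mem_cons_of_mem _ h)
        rcases ih (List.isChain_cons_cons.mp hc).2 (fun z hz => by
          rw [List.head?_cons] at hz; injection hz with h; subst h; exact hb) hy' with
          hall | ⟨l₁, p, q, l₂, heq, hpy, hyq⟩
        · left
          intro z hz
          rcases List.mem_cons.mp hz with rfl | hz
          · exact hay
          · exact hall z hz
        · exact Or.inr ⟨a :: l₁, p, q, l₂, by rw [heq]; simp, hpy, hyq⟩

private lemma insertCycle {m₁ m₂ : List V} {a b y : V}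
    (h : IsCycle A (m₁ ++ a :: b :: m₂)) (hy : y ∉ m₁ ++ a :: b :: m₂)
    (hay : A a y) (hyb : A y b) : IsCycle A (m₁ ++ a :: y :: b :: m₂) := by
  obtain ⟨-, hc, hn, hcl⟩ := h
  simp only [List.Chain'] at hc
  rw [List.isChain_append] at hc
  obtain ⟨hc₁, hc₂, hlink⟩ := hc
  refine ⟨by simp, ?_, ?_, ?_⟩
  · simp only [List.Chain']
    rw [List.isChain_append]
    refine ⟨hc₁, ?_, by simpa using hlink⟩
    rw [List.isChain_cons_cons] at hc₂ ⊢
    exact ⟨hay, List.isChain_cons_cons.mpr ⟨hyb, hc₂.2⟩⟩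
  · have hperm : (m₁ ++ a :: y :: b :: m₂).Perm (y :: (m₁ ++ a :: b :: m₂)) := by
      have h1 : (m₁ ++ [a]) ++ y :: (b :: m₂) = m₁ ++ a :: y :: b :: m₂ := by simp
      have h2 : (m₁ ++ [a]) ++ b :: m₂ = m₁ ++ a :: b :: m₂ := by simp
      rw [← h1, ← h2]
      exact List.perm_middle
    rw [hperm.nodup_iff, List.nodup_cons]
    exact ⟨hy, hn⟩
  · intro p q hp hq
    apply hcl p q
    · rw [List.getLast?_append_of_ne_nil _ (by simp)] at hp ⊢
      simpa using hp
    · rw [List.head?_append] at hq ⊢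
      simpa using hq

private lemma arcMem {l : List V} {u v : V} (h : ArcOfCycle l u v) : u ∈ l ∧ v ∈ l := by
  rcases h with h | ⟨h1, h2⟩
  · have := List.of_mem_zip h
    exact ⟨this.1, l.tail_sublist.mem this.2⟩
  · exact ⟨List.mem_of_mem_getLast? (by simp [h1]), List.mem_of_mem_head? (by simp [h2])⟩

private lemma stepB
    (hout : ∀ u v w : V, v ≠ w → A u v → A u w → (A v w ↔ ¬ A w v))
    (harc : ∀ u v : V, A u v → ∃ l : List V, IsCycle A l ∧ ArcOfCycle l u v)
    {c : List V} {u x y : V} (hc : IsCycle A c) (hu : u ∈ c) (hx : x ∈ c)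
    (hxy : A x y) : ∃ c', IsCycle A c' ∧ u ∈ c' ∧ y ∈ c' := by
  by_cases hyc : y ∈ c
  · exact ⟨c, hc, hu, hyc⟩
  obtain ⟨l₁, l₂, rfl⟩ := List.append_of_mem hx
  have hc' : IsCycle A (x :: (l₂ ++ l₁)) := cycleRot hc
  have hmem : ∀ z : V, z ∈ x :: (l₂ ++ l₁) ↔ z ∈ l₁ ++ x :: l₂ := by
    intro z; simp [List.mem_append, List.mem_cons]; tauto
  have hy' : y ∉ x :: (l₂ ++ l₁) := fun h => hyc ((hmem y).mp h)
  have hu' : u ∈ x :: (l₂ ++ l₁) := (hmem u).mpr hu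
  rcases insSplit hout y _ hc'.2.1
      (fun z hz => by injection hz with h; subst h; exact hxy) hy' with
    hall | ⟨m₁, a, b, m₂, heq, hay, hyb⟩
  · obtain ⟨cy, hcy, harcy⟩ := harc u y (hall u hu')
    obtain ⟨h1, h2⟩ := arcMem harcy
    exact ⟨cy, hcy, h1, h2⟩
  · rw [heq] at hc' hy' hu'
    refine ⟨m₁ ++ a :: y :: b :: m₂, insertCycle hc' hy' hay hyb, ?_, by simp⟩
    simp only [List.mem_append, List.mem_cons] at hu' ⊢
    tauto

private lemma pathC
    (hout : ∀ u v w : V, v ≠ w → A u v → A u w → (A v w ↔ ¬ A w v))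
    (harc : ∀ u v : V, A u v → ∃ l : List V, IsCycle A l ∧ ArcOfCycle l u v) :
    ∀ (l : List V), l.Chain' A → ∀ {u v : V}, l.getLast? = some v →
      ∀ c : List V, IsCycle A c → u ∈ c → (∀ z, l.head? = some z → z ∈ c) →
      ∃ c', IsCycle A c' ∧ u ∈ c' ∧ v ∈ c' := by
  intro l
  induction l with
  | nil => intro _ u v hv; simp at hv
  | cons a t ih =>
    intro hc u v hv c hcyc hu hhead
    have hac : a ∈ c := hhead a rfl
    match t, hc, hv, ih with
    | [], _, hv, _ =>
      simp only [List.getLast?_singleton, Option.some.injEq] at hv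
      subst hv
      exact ⟨c, hcyc, hu, hac⟩
    | b :: t', hc, hv, ih =>
      have hab : A a b := (List.isChain_cons_cons.mp hc).1
      obtain ⟨c₁, hc₁, hu₁, hb₁⟩ := stepB hout harc hcyc hu hac hab
      exact ih (List.isChain_cons_cons.mp hc).2 (by simpa using hv) c₁ hc₁ hu₁
        (fun z hz => by injection hz with h; subst h; exact hb₁)

private lemma listColorsMono {p q : List V} (h : p <+: q) :
    listColors col p ⊆ listColors col q := by
  obtain ⟨r, rfl⟩ := h
  intro cc hcc
  simp only [listColors, List.mem_toFinset, List.mem_map] at hcc ⊢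
  obtain ⟨pr, hpr, rfl⟩ := hcc
  exact ⟨pr, (zipTailPrefix p r).sublist.mem hpr, rfl⟩

private lemma extractD
    (hcyc : ∀ l : List V, IsCycle A l → (cycleColors col l).card ≤ k)
    {c : List V} {u v : V} (hc : IsCycle A c) (hv : v ∈ c) (hu : u ∈ c) :
    ReachK A col k v u := by
  classical
  obtain ⟨l₁, l₂, rfl⟩ := List.append_of_mem hv
  have hc' : IsCycle A (v :: (l₂ ++ l₁)) := cycleRot hc
  have hu' : u ∈ v :: (l₂ ++ l₁) := by
    simp only [List.mem_append, List.mem_cons] at hu ⊢; tauto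
  set c' := v :: (l₂ ++ l₁) with hc'def
  have hlt : c'.idxOf u < c'.length := List.idxOf_lt_length_iff.mpr hu'
  set p := c'.take (c'.idxOf u + 1) with hpdef
  have hlast : p.getLast? = some u := by
    have hlen : p.length = c'.idxOf u + 1 := by
      rw [hpdef, List.length_take]; omega
    rw [List.getLast?_eq_getElem?, hlen, hpdef]
    simp only [Nat.add_sub_cancel, List.getElem?_take, Nat.lt_succ_self, if_true]
    rw [List.getElem?_eq_getElem hlt, List.getElem_idxOf hlt]
  refine ⟨p, ⟨hc'.2.1.take _, (List.take_sublist _ _).nodup hc'.2.2.1, ?_, hlast⟩, ?_⟩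
  · rw [hpdef, hc'def, List.take_succ_cons, List.head?_cons]
  · have h1 : listColors col p ⊆ listColors col c' :=
      listColorsMono ⟨c'.drop (c'.idxOf u + 1), List.take_append_drop _ _⟩
    have h2 : listColors col c' ⊆ cycleColors col c' :=
      listColorsMono ⟨c'.take 1, rfl⟩
    calc (listColors col p).card ≤ (cycleColors col c').card :=
          Finset.card_le_card (h1.trans h2)
      _ ≤ k := hcyc c' hc'

end Aux

/-- In an arc-colored locally out-tournament digraph in which every arc lies on a
directed cycle and every directed cycle uses at most `k` colors: if there is a
directed path from `u` to `v`, then there is a directed path from `v` to `u` using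
at most `k` colors. -/

theorem stmt_16 (A : V → V → Prop) (col : V → V → ℕ) (k : ℕ)
    (hout : ∀ u v w : V, v ≠ w → A u v → A u w → (A v w ↔ ¬ A w v))
    (harc : ∀ u v : V, A u v → ∃ l : List V, IsCycle A l ∧ ArcOfCycle l u v)
    (hcyc : ∀ l : List V, IsCycle A l → (cycleColors col l).card ≤ k)
    (u v : V) (h : Reach A u v) :
    ReachK A col k v u := by
  obtain ⟨l, hchain, hnd, hhead, hlast⟩ := h
  match l, hchain, hnd, hhead, hlast with
  | [], _, _, hhead, _ => simp at hhead
  | [a], _, _, hhead, hlast =>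
    have ha : a = u := by injection hhead
    have hv : a = v := by simpa using hlast
    exact ⟨[a], ⟨List.isChain_singleton a, List.nodup_singleton a, by simp [hv], by simp [ha]⟩,
      by simp [listColors]⟩
  | a :: b :: t, hchain, hnd, hhead, hlast =>
    have ha : a = u := by injection hhead
    subst ha
    have hub : A a b := (List.isChain_cons_cons.mp hchain).1
    obtain ⟨c₀, hc₀, harc₀⟩ := harc a b hub
    obtain ⟨hu₀, hb₀⟩ := arcMem harc₀
    obtain ⟨c₁, hc₁, hu₁, hv₁⟩ := pathC hout harc (b :: t) (List.isChain_cons_cons.mp hchain).2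
      (by simpa using hlast) c₀ hc₀ hu₀ (fun z hz => by injection hz with h; subst h; exact hb₀)
    exact extractD hcyc hc₁ hv₁ hu₁
end

section
/- Let D be an arc-colored locally in-tournament digraph such that every arc of D belongs to a directed cycle and every directed cycle of D uses at most k colors. If there is a directed path from u to v, then there is a directed path from v to u using at most k colors. -/
variable {V : Type*}

section Helpers

variable {A : V → V → Prop} {col : V → V → ℕ}

/-- The list of consecutive pairs of a list. -/
def arcsL : List V → List (V × V)
  | [] => []
  | [_] => []
  | a :: b :: l => (a, b) :: arcsL (b :: l)

theorem zip_tail_eq_arcsL : ∀ l : List V, l.zip l.tail = arcsL l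
  | [] => rfl
  | [_] => rfl
  | a :: b :: l => by
      show (a, b) :: (b :: l).zip l = (a, b) :: arcsL (b :: l)
      exact congrArg _ (zip_tail_eq_arcsL (b :: l))

theorem mem_arcsL_append (p : V × V) :
    ∀ l1 l2 : List V, (p ∈ arcsL (l1 ++ l2) ↔
      p ∈ arcsL l1 ∨ (l1.getLast? = some p.1 ∧ l2.head? = some p.2) ∨ p ∈ arcsL l2)
  | [], l2 => by simp [arcsL]
  | [a], l2 => by
      cases l2 with
      | nil => simp [arcsL]
      | cons c t =>
        show p ∈ (a, c) :: arcsL (c :: t) ↔ _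
        simp [arcsL, Prod.ext_iff, eq_comm]
  | a :: b :: t, l2 => by
      have ih := mem_arcsL_append p (b :: t) l2
      show p ∈ (a, b) :: arcsL ((b :: t) ++ l2) ↔
        p ∈ (a, b) :: arcsL (b :: t) ∨ _ ∨ _
      rw [List.mem_cons, List.mem_cons, ih, List.getLast?_cons_cons]
      tauto

theorem chain'_iff_arcsL : ∀ l : List V, (List.Chain' A l ↔ ∀ p ∈ arcsL l, A p.1 p.2)
  | [] => by simp [arcsL]; exact List.isChain_nil
  | [a] => by simp [arcsL]; exact List.isChain_singleton a
  | a :: b :: t => by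
      rw [show List.Chain' A (a :: b :: t) ↔ A a b ∧ List.Chain' A (b :: t) from List.isChain_cons_cons,
        chain'_iff_arcsL (b :: t)]
      show _ ↔ ∀ p ∈ (a, b) :: arcsL (b :: t), A p.1 p.2
      simp only [List.mem_cons, forall_eq_or_imp]

theorem mem_listColors_s17 {x : ℕ} {l : List V} :
    x ∈ listColors col l ↔ ∃ p ∈ arcsL l, col p.1 p.2 = x := by
  simp [listColors, zip_tail_eq_arcsL]

theorem arcsL_take_one (l : List V) : arcsL (V := V) (l.take 1) = [] := by
  cases l <;> rfl

theorem head?_take_one (l : List V) : (l.take 1).head? = l.head? := by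
  cases l <;> rfl

theorem mem_arcsL_cyc (p : V × V) (l : List V) :
    p ∈ arcsL (l ++ l.take 1) ↔
      p ∈ arcsL l ∨ (l.getLast? = some p.1 ∧ l.head? = some p.2) := by
  rw [mem_arcsL_append, arcsL_take_one, head?_take_one]
  simp

theorem mem_cycleColors {x : ℕ} {l : List V} :
    x ∈ cycleColors col l ↔
      ∃ p, (p ∈ arcsL l ∨ (l.getLast? = some p.1 ∧ l.head? = some p.2)) ∧
        col p.1 p.2 = x := by
  show x ∈ listColors col (l ++ l.take 1) ↔ _
  rw [mem_listColors_s17]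
  simp only [mem_arcsL_cyc]

theorem arcsL_infix {p : V × V} {m : List V} (s t : List V) (h : p ∈ arcsL m) :
    p ∈ arcsL (s ++ m ++ t) := by
  rw [List.append_assoc, mem_arcsL_append]
  right; right
  rw [mem_arcsL_append]
  exact Or.inl h

theorem isCycle_rotate {l1 l2 : List V} {w : V}
    (h : IsCycle A (l1 ++ w :: l2)) : IsCycle A (w :: l2 ++ l1) := by
  obtain ⟨-, hch, hnd, hcl⟩ := h
  have hch' := hch
  rw [List.Chain', List.isChain_append] at hch'
  obtain ⟨h1, h2, hj⟩ := hch'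
  refine ⟨by simp, ?_, ?_, ?_⟩
  · rw [show w :: l2 ++ l1 = (w :: l2) ++ l1 from rfl, List.Chain', List.isChain_append]
    refine ⟨h2, h1, ?_⟩
    intro x hx y hy
    apply hcl
    · rw [Option.mem_def] at hx
      rw [List.getLast?_append_cons]
      exact hx
    · rw [Option.mem_def] at hy
      rw [List.head?_append, hy]
      rfl
  · exact (List.perm_append_comm (l₁ := l1) (l₂ := w :: l2)).nodup hnd
  · intro a b ha hb
    cases l1 with
    | nil =>
      simp only [List.append_nil] at ha hb ⊢
      exact hcl a b (by simpa using ha) (by simpa using hb)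
    | cons c t =>
      rw [show w :: l2 ++ (c :: t) = (w :: l2) ++ (c :: t) from rfl,
        List.getLast?_append_cons] at ha
      have hb' : b = w := by simpa using hb.symm
      subst hb'
      exact hj a (Option.mem_def.mpr ha) b rfl

theorem rotate_colors_subset (col : V → V → ℕ) {l1 l2 : List V} {w : V} :
    cycleColors col (w :: l2 ++ l1) ⊆ cycleColors col (l1 ++ w :: l2) := by
  intro x hx
  rw [mem_cycleColors] at hx ⊢
  obtain ⟨p, hp, hcolx⟩ := hx
  refine ⟨p, ?_, hcolx⟩
  rw [← mem_arcsL_cyc] at hp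
  have hp' : p ∈ arcsL ((w :: l2 ++ l1) ++ [w]) := hp
  have hinf : p ∈ arcsL (l1 ++ ((w :: l2 ++ l1) ++ [w]) ++ l2) := arcsL_infix _ _ hp'
  have heq : l1 ++ ((w :: l2 ++ l1) ++ [w]) ++ l2 = (l1 ++ w :: l2) ++ (l1 ++ w :: l2) := by
    simp
  rw [heq, mem_arcsL_append] at hinf
  rcases hinf with h | h | h
  · exact Or.inl h
  · exact Or.inr h
  · exact Or.inl h

theorem rotate_to_head (col : V → V → ℕ) {l : List V} {w : V}
    (h : IsCycle A l) (hw : w ∈ l) :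
    ∃ m, IsCycle A m ∧ m.head? = some w ∧ (∀ y, y ∈ m ↔ y ∈ l) ∧
      cycleColors col m ⊆ cycleColors col l := by
  obtain ⟨s, t, rfl⟩ := List.append_of_mem hw
  refine ⟨w :: t ++ s, isCycle_rotate h, rfl, ?_, rotate_colors_subset col⟩
  intro y
  simp only [List.mem_append, List.mem_cons]
  tauto

theorem arcsL_split {a b : V} : ∀ {l : List V}, (a, b) ∈ arcsL l →
    ∃ l1 l2, l = l1 ++ a :: b :: l2
  | [], h => by simp [arcsL] at h
  | [x], h => by simp [arcsL] at h
  | x :: y :: t, h => by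
      rw [show arcsL (x :: y :: t) = (x, y) :: arcsL (y :: t) from rfl, List.mem_cons] at h
      rcases h with h | h
      · obtain ⟨rfl, rfl⟩ : x = a ∧ y = b := by
          have := Prod.mk.injEq a b x y ▸ h
          exact ⟨(Prod.ext_iff.mp h).1.symm, (Prod.ext_iff.mp h).2.symm⟩
        exact ⟨[], t, rfl⟩
      · obtain ⟨l1, l2, he⟩ := arcsL_split h
        exact ⟨x :: l1, l2, by rw [List.cons_append, ← he]⟩

theorem isPathFrom_prefix {l1 l2 : List V} {x a : V}
    (hch : (l1 ++ x :: l2).Chain' A) (hnd : (l1 ++ x :: l2).Nodup)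
    (hhd : (l1 ++ x :: l2).head? = some a) :
    IsPathFrom A a x (l1 ++ [x]) := by
  rw [List.Chain', List.isChain_append] at hch
  refine ⟨?_, ?_, ?_, List.getLast?_concat⟩
  · rw [List.Chain', List.isChain_append]
    exact ⟨hch.1, List.isChain_singleton x,
      fun p hp q hq => hch.2.2 p hp q (by simpa using hq)⟩
  · refine List.Nodup.sublist ?_ hnd
    exact List.Sublist.append_left (List.cons_sublist_cons.mpr (List.nil_sublist l2)) l1
  · rw [List.head?_append] at hhd ⊢
    exact hhd

theorem isPathFrom_suffix {l1 l2 : List V} {x a b : V}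
    (h : IsPathFrom A a b (l1 ++ x :: l2)) : IsPathFrom A x b (x :: l2) := by
  obtain ⟨hch, hnd, -, hlast⟩ := h
  rw [List.Chain', List.isChain_append] at hch
  refine ⟨hch.2.1, ?_, rfl, ?_⟩
  · exact List.Nodup.sublist (List.sublist_append_right l1 (x :: l2)) hnd
  · rw [List.getLast?_append_cons] at hlast
    exact hlast

theorem firstin (s : V → Prop) : ∀ l : List V, (∃ y ∈ l, s y) →
    ∃ l1 x l2, l = l1 ++ x :: l2 ∧ s x ∧ ∀ y ∈ l1, ¬ s y
  | [], h => by simp at h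
  | a :: t, h => by
      by_cases hsa : s a
      · exact ⟨[], a, t, rfl, hsa, by simp⟩
      · have h' : ∃ y ∈ t, s y := by
          obtain ⟨y, hy, hsy⟩ := h
          rcases List.mem_cons.mp hy with rfl | hy'
          · exact absurd hsy hsa
          · exact ⟨y, hy', hsy⟩
        obtain ⟨l1, x, l2, heq, hsx, hl1⟩ := firstin s t h'
        refine ⟨a :: l1, x, l2, by rw [heq]; rfl, hsx, ?_⟩
        intro y hy
        rcases List.mem_cons.mp hy with rfl | hy'
        · exact hsa
        · exact hl1 y hy'

theorem lastin (s : V → Prop) : ∀ l : List V, (∃ y ∈ l, s y) →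
    ∃ l1 x l2, l = l1 ++ x :: l2 ∧ s x ∧ ∀ y ∈ l2, ¬ s y
  | [], h => by simp at h
  | a :: t, h => by
      by_cases hst : ∃ y ∈ t, s y
      · obtain ⟨l1, x, l2, heq, hsx, hl2⟩ := lastin s t hst
        exact ⟨a :: l1, x, l2, by rw [heq]; rfl, hsx, hl2⟩
      · have hsa : s a := by
          obtain ⟨y, hy, hsy⟩ := h
          rcases List.mem_cons.mp hy with rfl | hy'
          · exact hsy
          · exact absurd ⟨y, hy', hsy⟩ hst
        exact ⟨[], a, t, rfl, hsa, fun y hy hsy => hst ⟨y, hy, hsy⟩⟩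

theorem cycle_snoc {l : List V} {x c z : V} (hl : IsCycle A l) (hx : x ∉ l)
    (hc : l.head? = some c) (hxc : A x c) (hz : l.getLast? = some z) (hzx : A z x) :
    IsCycle A (l ++ [x]) := by
  obtain ⟨hne, hch, hnd, hcl⟩ := hl
  refine ⟨by simp, ?_, ?_, ?_⟩
  · rw [List.Chain', List.isChain_append]
    refine ⟨hch, List.isChain_singleton x, ?_⟩
    intro p hp q hq
    have hp' : z = p := by rw [Option.mem_def, hz] at hp; simpa using hp
    have hq' : x = q := by simpa using hq
    subst hp'; subst hq'; exact hzx
  · rw [List.nodup_append]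
    exact ⟨hnd, List.nodup_singleton x, fun y hy b hb hyb => hx (by simp at hb; subst hb; subst hyb; exact hy)⟩
  · intro a b ha hb
    have ha' : a = x := by rw [List.getLast?_concat] at ha; simpa using ha.symm
    have hb' : b = c := by
      rw [List.head?_append, hc] at hb
      simpa using hb.symm
    subst ha'; subst hb'; exact hxc

theorem cycle_insert {P t : List V} {x : V} (hP : P ≠ []) (ht : t ≠ [])
    (hch : (P ++ t).Chain' A) (hnd : (P ++ t).Nodup)
    (hcl : ∀ a b, (P ++ t).getLast? = some a → (P ++ t).head? = some b → A a b)
    (hx : x ∉ P ++ t) (hzx : ∀ p ∈ P.getLast?, A p x) (hxw : ∀ q ∈ t.head?, A x q) :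
    IsCycle A (P ++ x :: t) := by
  obtain ⟨p0, P', rfl⟩ := List.exists_cons_of_ne_nil hP
  obtain ⟨w, t', rfl⟩ := List.exists_cons_of_ne_nil ht
  rw [List.Chain', List.isChain_append] at hch
  refine ⟨by simp, ?_, ?_, ?_⟩
  · rw [List.Chain', List.isChain_append]
    refine ⟨hch.1, ?_, fun p hp q hq => by
      have hq' : x = q := by simpa using hq
      exact hq' ▸ hzx p hp⟩
    rw [List.isChain_cons_cons]
    exact ⟨hxw w rfl, hch.2.1⟩
  · rw [List.nodup_middle]
    rw [List.nodup_cons]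
    exact ⟨hx, hnd⟩
  · intro a b ha hb
    have hb' : b = p0 := by simpa using hb.symm
    rw [List.getLast?_append_cons, List.getLast?_cons_cons] at ha
    rw [hb']
    apply hcl a p0 _ rfl
    rw [List.getLast?_append_cons]
    exact ha

theorem arc_reach_back (harc : ∀ u v : V, A u v → ∃ l : List V, IsCycle A l ∧ ArcOfCycle l u v)
    {a b : V} (h : A a b) : Reach A b a := by
  obtain ⟨C, hC, harc'⟩ := harc a b h
  rcases harc' with hzip | ⟨hlast, hhead⟩
  · rw [zip_tail_eq_arcsL] at hzip
    obtain ⟨C1, C2, rfl⟩ := arcsL_split hzip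
    have hC' : IsCycle A (b :: C2 ++ (C1 ++ [a])) := by
      apply isCycle_rotate (l1 := C1 ++ [a]) (l2 := C2) (w := b)
      simpa [List.append_assoc] using hC
    obtain ⟨hne, hch, hnd, -⟩ := hC'
    refine ⟨b :: C2 ++ (C1 ++ [a]), hch, hnd, rfl, ?_⟩
    rw [show b :: C2 ++ (C1 ++ [a]) = (b :: (C2 ++ C1)) ++ [a] by simp]
    exact List.getLast?_concat
  · exact ⟨C, hC.2.1, hC.2.2.1, hhead, hlast⟩

theorem ext_claim
    (hin : ∀ u v w : V, v ≠ w → A v u → A w u → (A v w ↔ ¬ A w v))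
    {l : List V} {x c : V}
    (hl : IsCycle A l) (hx : x ∉ l) (hc : l.head? = some c) (hxc : A x c) :
    ∀ n (P t : List V), P.length ≤ n → l = P ++ t → (∀ y ∈ t, A x y) →
      (∃ C', IsCycle A C' ∧ x ∈ C' ∧ ∀ y ∈ l, y ∈ C') ∨ (∀ y ∈ l, A x y) := by
  intro n
  induction n with
  | zero =>
    intro P t hP hlt hall
    have hP0 : P = [] := List.length_eq_zero_iff.mp (Nat.le_zero.mp hP)
    subst hP0
    right
    simpa [hlt] using hall
  | succ n ih =>
    intro P t hP hlt hall
    rcases List.eq_nil_or_concat P with rfl | ⟨P', z, rfl⟩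
    · right
      simpa [hlt] using hall
    · rw [List.concat_eq_append] at hlt hP
      have hzl : z ∈ l := by rw [hlt]; simp
      have hxz_ne : x ≠ z := fun h => hx (h ▸ hzl)
      obtain ⟨hne, hch, hnd, hcl⟩ := hl
      cases t with
      | nil =>
        have hlast : l.getLast? = some z := by
          rw [hlt]; simp
        have hAzc : A z c := hcl z c hlast hc
        by_cases hzx : A z x
        · left
          refine ⟨l ++ [x], cycle_snoc ⟨hne, hch, hnd, hcl⟩ hx hc hxc hlast hzx, by simp, ?_⟩
          intro y hy; simp [hy]
        · have hxz : A x z := (hin c x z hxz_ne hxc hAzc).mpr hzx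
          refine ih P' [z] ?_ ?_ ?_
          · simpa using hP
          · simpa using hlt
          · intro y hy
            have : y = z := by simpa using hy
            subst this; exact hxz
      | cons w t' =>
        have hAxw : A x w := hall w (by simp)
        have hch' := hch
        rw [hlt, List.Chain', List.isChain_append] at hch'
        have hAzw : A z w := hch'.2.2 z (by rw [Option.mem_def]; exact List.getLast?_concat) w rfl
        by_cases hzx : A z x
        · left
          have hxl' : x ∉ (P' ++ [z]) ++ w :: t' := by rw [← hlt]; exact hx
          have hcl' : ∀ a b, ((P' ++ [z]) ++ w :: t').getLast? = some a →
              ((P' ++ [z]) ++ w :: t').head? = some b → A a b := by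
            rw [← hlt]; exact hcl
          refine ⟨(P' ++ [z]) ++ x :: (w :: t'), ?_, by simp, ?_⟩
          · apply cycle_insert (by simp) (by simp) (by rw [← hlt]; exact hch)
              (by rw [← hlt]; exact hnd) hcl' hxl'
            · intro p hp
              have hp' : z = p := by
                rw [Option.mem_def, List.getLast?_concat] at hp
                simpa using hp
              exact hp' ▸ hzx
            · intro q hq
              have hq' : w = q := by simpa using hq
              exact hq' ▸ hAxw
          · intro y hy
            rw [hlt] at hy
            simp only [List.mem_append, List.mem_cons] at hy ⊢
            tauto
        · have hxz : A x z := (hin w x z hxz_ne hAxw hAzw).mpr hzx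
          refine ih P' (z :: w :: t') ?_ ?_ ?_
          · simpa using hP
          · simpa using hlt
          · intro y hy
            rcases List.mem_cons.mp hy with rfl | hy'
            · exact hxz
            · exact hall y hy'

theorem ext_cycle
    (hin : ∀ u v w : V, v ≠ w → A v u → A w u → (A v w ↔ ¬ A w v))
    (harc : ∀ u v : V, A u v → ∃ l : List V, IsCycle A l ∧ ArcOfCycle l u v)
    {C : List V} (hC : IsCycle A C) {x c : V}
    (hx : x ∉ C) (hc : c ∈ C) (hxc : A x c) :
    ∃ C', IsCycle A C' ∧ x ∈ C' ∧ ∀ y ∈ C, y ∈ C' := by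
  classical
  obtain ⟨l, hl, hlhd, hlmem, -⟩ := rotate_to_head (fun _ _ => 0) hC hc
  have hxl : x ∉ l := fun h => hx ((hlmem x).mp h)
  have base := ext_claim hin hl hxl hlhd hxc l.length l [] le_rfl (by simp) (by simp)
  rcases base with ⟨C', h1, h2, h3⟩ | hall
  · exact ⟨C', h1, h2, fun y hy => h3 y ((hlmem y).mpr hy)⟩
  · obtain ⟨R, hR⟩ := arc_reach_back harc hxc
    have hcR : c ∈ R := List.mem_of_mem_head? (by rw [hR.2.2.1]; rfl)
    have hcl' : c ∈ l := (hlmem c).mpr hc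
    obtain ⟨R1, z, R2, hRsplit, hzl, hR2⟩ := lastin (fun y => y ∈ l) R ⟨c, hcR, hcl'⟩
    rw [hRsplit] at hR
    have hpath : IsPathFrom A z x (z :: R2) := isPathFrom_suffix hR
    have hzx_ne : z ≠ x := fun h => hxl (h ▸ hzl)
    have hR2ne : R2 ≠ [] := by
      intro h
      subst h
      have : some z = some x := hpath.2.2.2
      exact hzx_ne (by simpa using this)
    have hxR2 : x ∈ R2 := by
      have hxmem : x ∈ z :: R2 := by
        have := hpath.2.2.2
        have h' : (z :: R2).dropLast ++ [x] = z :: R2 := List.dropLast_append_getLast? x this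
        rw [← h']; simp
      rcases List.mem_cons.mp hxmem with h | h
      · exact absurd h.symm hzx_ne
      · exact h
    obtain ⟨m, hm, hmhd, hmmem, -⟩ := rotate_to_head (fun _ _ => 0) hl hzl
    obtain ⟨z', M, rfl⟩ : ∃ z' M, m = z' :: M := by
      cases m with
      | nil => simp at hmhd
      | cons z' M => exact ⟨z', M, rfl⟩
    have hz' : z = z' := by simpa using hmhd.symm
    subst hz'
    obtain ⟨hmne, hmch, hmnd, hmcl⟩ := hm
    refine ⟨(z :: R2) ++ M, ⟨by simp, ?_, ?_, ?_⟩, by simp [hxR2], ?_⟩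
    · rw [List.Chain', List.isChain_append]
      refine ⟨hpath.1, (List.isChain_cons.mp hmch).2, ?_⟩
      intro p hp q hq
      have hp' : p = x := by
        rw [Option.mem_def, hpath.2.2.2] at hp
        simpa using hp.symm
      subst hp'
      exact hall q ((hmmem q).mp (List.mem_cons_of_mem z (List.mem_of_mem_head? hq)))
    · rw [List.nodup_append]
      refine ⟨hpath.2.1, (List.nodup_cons.mp hmnd).2, ?_⟩
      intro y hy y' hyM hyy; subst hyy
      rcases List.mem_cons.mp hy with rfl | hy'
      · exact (List.nodup_cons.mp hmnd).1 hyM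
      · exact hR2 y hy' ((hmmem y).mp (List.mem_cons_of_mem z hyM))
    · intro a b ha hb
      have hb' : b = z := by simpa using hb.symm
      subst hb'
      cases M with
      | nil =>
        rw [List.append_nil] at ha
        have ha' : a = x := by
          rw [hpath.2.2.2] at ha
          simpa using ha.symm
        subst ha'
        exact hall b hzl
      | cons m0 M' =>
        rw [List.getLast?_append_cons] at ha
        apply hmcl a b _ rfl
        rw [List.getLast?_cons_cons]
        exact ha
    · intro y hy
      have : y ∈ z :: M := (hmmem y).mpr ((hlmem y).mpr hy)
      rcases List.mem_cons.mp this with rfl | h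
      · simp
      · simp [h]

theorem descent
    (hin : ∀ u v w : V, v ≠ w → A v u → A w u → (A v w ↔ ¬ A w v))
    (harc : ∀ u v : V, A u v → ∃ l : List V, IsCycle A l ∧ ArcOfCycle l u v) :
    ∀ n (q : List V) (a b : V) (C : List V), q.length ≤ n → IsPathFrom A a b q →
      IsCycle A C → b ∈ C →
      ∃ C', IsCycle A C' ∧ a ∈ C' ∧ ∀ y ∈ C, y ∈ C' := by
  classical
  intro n
  induction n with
  | zero =>
    intro q a b C hq hpath _ _
    have : q = [] := List.length_eq_zero_iff.mp (Nat.le_zero.mp hq)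
    subst this
    simp [IsPathFrom] at hpath
  | succ n ih =>
    intro q a b C hq hpath hC hbC
    by_cases haC : a ∈ C
    · exact ⟨C, hC, haC, fun y hy => hy⟩
    · have hbq : b ∈ q := by
        have h' := List.dropLast_append_getLast? b hpath.2.2.2
        rw [← h']; simp
      obtain ⟨q1, x0, q2, hqsplit, hx0C, hq1⟩ := firstin (fun y => y ∈ C) q ⟨b, hbq, hbC⟩
      have hq1ne : q1 ≠ [] := by
        intro h
        subst h
        rw [hqsplit] at hpath
        have : x0 = a := by simpa using hpath.2.2.1
        exact haC (this ▸ hx0C)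
      obtain ⟨q1', z, rfl⟩ := (List.eq_nil_or_concat q1).resolve_left hq1ne
      rw [List.concat_eq_append] at hqsplit hq1
      have hz : z ∉ C := hq1 z (by simp)
      rw [hqsplit] at hpath
      have hch := hpath.1
      rw [List.Chain', List.isChain_append] at hch
      have hAzx0 : A z x0 :=
        hch.2.2 z (by rw [Option.mem_def]; exact List.getLast?_concat) x0 rfl
      obtain ⟨C'', hC'', hxC'', hsub⟩ := ext_cycle hin harc hC hz hx0C hAzx0
      have hpath' : IsPathFrom A a z (q1' ++ [z]) := by
        have h1 : (q1' ++ z :: (x0 :: q2)).Chain' A := by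
          have := hpath.1; simpa [List.append_assoc] using this
        have h2 : (q1' ++ z :: (x0 :: q2)).Nodup := by
          have := hpath.2.1; simpa [List.append_assoc] using this
        have h3 : (q1' ++ z :: (x0 :: q2)).head? = some a := by
          have := hpath.2.2.1; simpa [List.append_assoc] using this
        exact isPathFrom_prefix h1 h2 h3
      have hlen : (q1' ++ [z]).length ≤ n := by
        have := hqsplit ▸ hq
        simp only [List.length_append, List.length_cons] at this ⊢
        omega
      obtain ⟨C', h1, h2, h3⟩ := ih (q1' ++ [z]) a z C'' hlen hpath' hC'' hxC''
      exact ⟨C', h1, h2, fun y hy => h3 y (hsub y hy)⟩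

theorem stmt_17' (A : V → V → Prop) (col : V → V → ℕ) (k : ℕ)
    (hin : ∀ u v w : V, v ≠ w → A v u → A w u → (A v w ↔ ¬ A w v))
    (harc : ∀ u v : V, A u v → ∃ l : List V, IsCycle A l ∧ ArcOfCycle l u v)
    (hcyc : ∀ l : List V, IsCycle A l → (cycleColors col l).card ≤ k)
    (u v : V) (h : Reach A u v) :
    ReachK A col k v u := by
  classical
  by_cases huv : u = v
  · subst huv
    refine ⟨[u], ⟨List.isChain_singleton u, List.nodup_singleton u, rfl, rfl⟩, ?_⟩
    simp [listColors]
  · obtain ⟨p, hp⟩ := h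
    have hlast := hp.2.2.2
    have hdecomp : p.dropLast ++ [v] = p := List.dropLast_append_getLast? v hlast
    have hdl : p.dropLast ≠ [] := by
      intro hnil
      rw [hnil, List.nil_append] at hdecomp
      rw [← hdecomp] at hp
      have h1 : v = u := by simpa using hp.2.2.1
      exact huv h1.symm
    obtain ⟨p2, w, hdl2⟩ := (List.eq_nil_or_concat p.dropLast).resolve_left hdl
    rw [List.concat_eq_append] at hdl2
    have hpeq : p = p2 ++ w :: [v] := by
      rw [← hdecomp, hdl2]; simp
    have hAwv : A w v := by
      have hch := hp.1
      rw [hpeq, show p2 ++ w :: [v] = (p2 ++ [w]) ++ [v] by simp, List.Chain', List.isChain_append] at hch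
      exact hch.2.2 w (by rw [Option.mem_def]; exact List.getLast?_concat) v rfl
    obtain ⟨C0, hC0, harc0⟩ := harc w v hAwv
    have hvC0 : v ∈ C0 := by
      rcases harc0 with hzip | ⟨-, hhead⟩
      · rw [zip_tail_eq_arcsL] at hzip
        obtain ⟨l1, l2, rfl⟩ := arcsL_split hzip
        simp
      · exact List.mem_of_mem_head? (by rw [hhead]; rfl)
    obtain ⟨C, hC, huC, hsub⟩ := descent hin harc p.length p u v C0 le_rfl hp hC0 hvC0
    have hvC : v ∈ C := hsub v hvC0
    obtain ⟨m, hm, hmhd, hmmem, hmcol⟩ := rotate_to_head col hC hvC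
    have hum : u ∈ m := (hmmem u).mpr huC
    obtain ⟨n1, n2, hmeq⟩ := List.append_of_mem hum
    obtain ⟨hmne, hmch, hmnd, hmcl⟩ := hm
    have hpath : IsPathFrom A v u (n1 ++ [u]) := by
      apply isPathFrom_prefix (l2 := n2)
      · rw [← hmeq]; exact hmch
      · rw [← hmeq]; exact hmnd
      · rw [← hmeq]; exact hmhd
    refine ⟨n1 ++ [u], hpath, ?_⟩
    have hsub1 : listColors col (n1 ++ [u]) ⊆ cycleColors col m := by
      intro color hcolor
      rw [mem_listColors_s17] at hcolor
      obtain ⟨pr, hpr, hcoleq⟩ := hcolor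
      rw [mem_cycleColors]
      refine ⟨pr, Or.inl ?_, hcoleq⟩
      rw [hmeq, mem_arcsL_append]
      rw [mem_arcsL_append] at hpr
      rcases hpr with h' | h' | h'
      · exact Or.inl h'
      · exact Or.inr (Or.inl ⟨h'.1, by simpa using h'.2⟩)
      · simp [arcsL] at h'
    have hsub2 : listColors col (n1 ++ [u]) ⊆ cycleColors col C :=
      fun y hy => hmcol (hsub1 hy)
    calc (listColors col (n1 ++ [u])).card ≤ (cycleColors col C).card :=
          Finset.card_le_card hsub2
      _ ≤ k := hcyc C hC

end Helpers

/-- In an arc-colored locally in-tournament digraph in which every arc lies on a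
directed cycle and every directed cycle uses at most `k` colors: if there is a
directed path from `u` to `v`, then there is a directed path from `v` to `u` using
at most `k` colors. -/
theorem stmt_17 (A : V → V → Prop) (col : V → V → ℕ) (k : ℕ)
    (hin : ∀ u v w : V, v ≠ w → A v u → A w u → (A v w ↔ ¬ A w v))
    (harc : ∀ u v : V, A u v → ∃ l : List V, IsCycle A l ∧ ArcOfCycle l u v)
    (hcyc : ∀ l : List V, IsCycle A l → (cycleColors col l).card ≤ k)
    (u v : V) (h : Reach A u v) :
    ReachK A col k v u :=
  stmt_17' A col k hin harc hcyc u v h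
end
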